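/- arXiv:2208.13057 — 10 statements merged into one kernel-verified Lean document; each statement's English description precedes it below -/
import Mathlib

section
/- Let Δ > 0, let g : ℂ → ℂ be complex differentiable (analytic) on the open disk {ω ∈ ℂ : |ω| < Δ}, let F : ℝ → ℝ be a measurable function with F(y) > 0 for y > 0, and suppose that |g(ω)| ≤ F(|Im ω|) for every ω with |ω| < Δ and Im ω ≠ 0. Then for every ρ ∈ (0, Δ) such that θ ↦ log F(ρ·sin θ) is integrable on (0, π/2), one has |g(0)| ≤ exp( (2/π) · ∫₀^{π/2} log F(ρ·sin θ) dθ ). -/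
open MeasureTheory Real Complex intervalIntegral Metric Set Filter

private lemma fourier_eval (k : ℤ) (θ : ℝ) :
    (fourier k : C(AddCircle (2*Real.pi), ℂ)) (θ : AddCircle (2*Real.pi)) =
      Complex.exp ((k:ℂ) * θ * Complex.I) := by
  rw [fourier_coe_apply]
  congr 1
  have hπ : (Real.pi : ℂ) ≠ 0 := by exact_mod_cast Real.pi_ne_zero
  field_simp
  push_cast
  ring

private lemma re_intervalIntegral {F : ℝ → ℂ} {a b : ℝ}
    (hF : IntervalIntegrable F volume a b) :
    (∫ x in a..b, F x).re = ∫ x in a..b, (F x).re := by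
  have h1 := integral_re hF.1
  have h2 := integral_re hF.2
  simp only [RCLike.re_to_complex] at h1 h2
  simp only [intervalIntegral, Complex.sub_re, h1, h2]

private lemma lemA {Δ ρ : ℝ} (hρ0 : 0 < ρ) (hρΔ : ρ < Δ) {g : ℂ → ℂ}
    (hg : DifferentiableOn ℂ g (Metric.ball (0:ℂ) Δ))
    {φ : ℝ → ℝ} (hφc : Continuous φ) (hφp : Function.Periodic φ (2*Real.pi))
    (hb : ∀ θ : ℝ, ‖g (circleMap 0 ρ θ)‖ ≤ Real.exp (φ θ)) :
    ‖g 0‖ ≤ Real.exp ((2*Real.pi)⁻¹ * ∫ θ in (0:ℝ)..(2*Real.pi), φ θ) := by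
  have hπ : (0:ℝ) < Real.pi := Real.pi_pos
  haveI : Fact (0 < 2*Real.pi) := ⟨by positivity⟩
  set A : ℝ := (2*Real.pi)⁻¹ * ∫ θ in (0:ℝ)..(2*Real.pi), φ θ with hA
  suffices h : ∀ ε : ℝ, 0 < ε → ‖g 0‖ ≤ Real.exp (A + 2*ε) by
    have t : Tendsto (fun ε : ℝ => Real.exp (A + 2*ε)) (nhdsWithin 0 (Set.Ioi 0))
        (nhds (Real.exp (A + 2*0))) :=
      ((Real.continuous_exp.comp (by continuity)).tendsto 0).mono_left nhdsWithin_le_nhds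
    simpa using ge_of_tendsto t (eventually_mem_nhdsWithin.mono h)
  intro ε hε
  -- lift φ to the additive circle
  have hcont_lift : Continuous fun x : AddCircle (2*Real.pi) => ((hφp.lift x : ℝ) : ℂ) :=
    Complex.continuous_ofReal.comp (hφc.quotient_liftOn' _)
  set φ' : C(AddCircle (2*Real.pi), ℂ) := ⟨_, hcont_lift⟩ with hφ'
  -- Fourier approximation
  have hmem : φ' ∈ closure ((Submodule.span ℂ (Set.range (@fourier (2*Real.pi)))) : Set _) := by
    rw [← Submodule.topologicalClosure_coe, span_fourier_closure_eq_top]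
    trivial
  obtain ⟨f, hfmem, hfdist⟩ := Metric.mem_closure_iff.1 hmem ε hε
  obtain ⟨c, hc⟩ := Finsupp.mem_span_range_iff_exists_finsupp.1 hfmem
  -- pointwise formula for f
  have hfθ : ∀ θ : ℝ, f (θ : AddCircle (2*Real.pi)) =
      ∑ k ∈ c.support, c k * Complex.exp ((k:ℂ) * θ * Complex.I) := by
    intro θ
    rw [← hc, Finsupp.sum]
    simp only [ContinuousMap.coe_sum, Finset.sum_apply, ContinuousMap.coe_smul, Pi.smul_apply,
      smul_eq_mul]
    refine Finset.sum_congr rfl fun k _ => ?_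
    rw [fourier_eval]
  -- pointwise closeness
  have hclose : ∀ θ : ℝ, ‖f (θ : AddCircle (2*Real.pi)) - (φ θ : ℂ)‖ ≤ ε := by
    intro θ
    have heq : (f - φ') (θ : AddCircle (2*Real.pi)) = f (θ:AddCircle (2*Real.pi)) - (φ θ : ℂ) := by
      simp [hφ']
    have h1 := ContinuousMap.norm_coe_le_norm (f - φ') (θ : AddCircle (2*Real.pi))
    rw [heq] at h1
    have h2 : ‖f - φ'‖ ≤ ε := by
      rw [← dist_eq_norm]
      exact le_of_lt (by rwa [dist_comm])
    exact le_trans h1 h2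
  -- the analytic polynomial Q
  set Q : ℂ → ℂ := fun z =>
    ∑ k ∈ c.support, (if 0 ≤ k then c k else (starRingEnd ℂ) (c k)) * (z / ρ) ^ k.natAbs
    with hQ
  have hQdiff : Differentiable ℂ Q := by
    apply Differentiable.fun_sum
    intro k _
    exact (differentiable_const _).mul ((differentiable_id.div_const _).pow _)
  have hρC : (ρ:ℂ) ≠ 0 := by exact_mod_cast hρ0.ne'
  -- real part of Q on the circle
  have hcm : ∀ θ : ℝ, circleMap 0 ρ θ / ρ = Complex.exp (θ * Complex.I) := by
    intro θ
    rw [circleMap]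
    push_cast
    rw [zero_add, mul_comm, mul_div_assoc, div_self hρC, mul_one]
  have hQre : ∀ θ : ℝ, (Q (circleMap 0 ρ θ)).re = (f (θ : AddCircle (2*Real.pi))).re := by
    intro θ
    rw [hfθ θ]
    simp only [hQ, Complex.re_sum]
    refine Finset.sum_congr rfl fun k _ => ?_
    rw [hcm θ, ← Complex.exp_nat_mul]
    by_cases hk : 0 ≤ k
    · have h' : (k.natAbs : ℤ) = k := Int.natAbs_of_nonneg hk
      have hnat : ((k.natAbs : ℂ)) = (k : ℂ) := by
        calc ((k.natAbs : ℕ) : ℂ) = ((k.natAbs : ℤ) : ℂ) := (Int.cast_natCast _).symm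
          _ = (k : ℂ) := by rw [h']
      rw [if_pos hk, hnat]
      congr 2
      ring
    · have h' : (k.natAbs : ℤ) = -k := by
        rw [← Int.natAbs_neg]; exact Int.natAbs_of_nonneg (by omega)
      have hnat : ((k.natAbs : ℂ)) = -(k : ℂ) := by
        calc ((k.natAbs : ℕ) : ℂ) = ((k.natAbs : ℤ) : ℂ) := (Int.cast_natCast _).symm
          _ = -(k : ℂ) := by rw [h', Int.cast_neg]
      rw [if_neg hk, hnat]
      rw [← Complex.conj_re (c k * Complex.exp ((k:ℂ) * θ * Complex.I))]
      rw [map_mul, ← Complex.exp_conj]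
      have hcexp : (starRingEnd ℂ) ((k:ℂ) * θ * Complex.I) = -(k:ℂ) * (θ * Complex.I) := by
        simp only [map_mul, Complex.conj_I, Complex.conj_ofReal, map_intCast]
        ring
      rw [hcexp]
  -- value of Q at 0
  have hQ0 : Q 0 = c 0 := by
    have h1 : Q 0 = ∑ k ∈ c.support, if k = 0 then c 0 else 0 := by
      simp only [hQ]
      refine Finset.sum_congr rfl fun k _ => ?_
      by_cases hk : k = 0
      · subst hk; simp
      · have hn : k.natAbs ≠ 0 := Int.natAbs_ne_zero.mpr hk
        simp [hk, zero_pow hn]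
    rw [h1, Finset.sum_ite_eq' c.support 0 (fun _ => c 0)]
    by_cases h0 : (0:ℤ) ∈ c.support
    · rw [if_pos h0]
    · rw [if_neg h0, Finsupp.notMem_support_iff.mp h0]
  -- integral of the monomials
  have hIk : ∀ k : ℤ, (∫ θ in (0:ℝ)..(2*Real.pi), c k * Complex.exp ((k:ℂ) * θ * Complex.I))
      = if k = 0 then ((2*Real.pi : ℝ):ℂ) * c 0 else 0 := by
    intro k
    by_cases hk : k = 0
    · subst hk
      rw [if_pos rfl]
      simp only [Int.cast_zero, zero_mul, Complex.exp_zero, mul_one]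
      rw [intervalIntegral.integral_const, sub_zero, Complex.real_smul]
    · rw [if_neg hk]
      have h1 : ∀ θ:ℝ, (k:ℂ) * θ * Complex.I = ((k:ℂ) * Complex.I) * θ := fun θ => by ring
      simp_rw [h1]
      rw [intervalIntegral.integral_const_mul]
      have hkI : (k:ℂ) * Complex.I ≠ 0 :=
        mul_ne_zero (Int.cast_ne_zero.mpr hk) Complex.I_ne_zero
      rw [integral_exp_mul_complex hkI]
      have h2 : ((k:ℂ) * Complex.I) * ((2*Real.pi : ℝ):ℂ) = (k:ℂ) * (2*(Real.pi:ℂ)*Complex.I) := by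
        push_cast; ring
      rw [h2, Complex.exp_int_mul_two_pi_mul_I]
      simp
  -- continuity of f on ℝ
  have hfcont : Continuous fun θ : ℝ => f (θ : AddCircle (2*Real.pi)) :=
    f.continuous.comp (AddCircle.continuous_mk' _)
  have hfint : IntervalIntegrable (fun θ : ℝ => f (θ : AddCircle (2*Real.pi)))
      volume 0 (2*Real.pi) := hfcont.intervalIntegrable _ _
  -- integral of f
  have hintf : (∫ θ in (0:ℝ)..(2*Real.pi), f (θ : AddCircle (2*Real.pi)))
      = ((2*Real.pi : ℝ):ℂ) * c 0 := by
    have hcongr : (∫ θ in (0:ℝ)..(2*Real.pi), f (θ : AddCircle (2*Real.pi)))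
        = ∫ θ in (0:ℝ)..(2*Real.pi), ∑ k ∈ c.support, c k * Complex.exp ((k:ℂ)*θ*Complex.I) := by
      apply intervalIntegral.integral_congr
      intro θ _
      exact hfθ θ
    rw [hcongr, intervalIntegral.integral_finset_sum]
    · have := Finset.sum_congr rfl (fun k (_ : k ∈ c.support) => hIk k)
      rw [this, Finset.sum_ite_eq' c.support 0 (fun _ => ((2*Real.pi:ℝ):ℂ) * c 0)]
      by_cases h0 : (0:ℤ) ∈ c.support
      · rw [if_pos h0]
      · rw [if_neg h0, Finsupp.notMem_support_iff.mp h0, mul_zero]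
    · intro k _
      apply Continuous.intervalIntegrable
      exact continuous_const.mul (Complex.continuous_exp.comp
        ((continuous_const.mul Complex.continuous_ofReal).mul continuous_const))
  -- bound on Re (c 0)
  have hrec0 : (c 0).re ≤ A + ε := by
    have h1 : (∫ θ in (0:ℝ)..(2*Real.pi), (f (θ : AddCircle (2*Real.pi))).re)
        = (2*Real.pi) * (c 0).re := by
      rw [← re_intervalIntegral hfint, hintf]
      simp [Complex.mul_re]
    have h2 : (∫ θ in (0:ℝ)..(2*Real.pi), (f (θ : AddCircle (2*Real.pi))).re)
        ≤ ∫ θ in (0:ℝ)..(2*Real.pi), (φ θ + ε) := by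
      apply intervalIntegral.integral_mono_on (by positivity)
      · exact (Complex.continuous_re.comp hfcont).intervalIntegrable _ _
      · exact ((hφc.add continuous_const)).intervalIntegrable _ _
      · intro θ _
        have h3 : (f (θ:AddCircle (2*Real.pi))).re - φ θ ≤ ε := by
          have := Complex.re_le_norm (f (θ:AddCircle (2*Real.pi)) - (φ θ : ℂ))
          rw [Complex.sub_re, Complex.ofReal_re] at this
          exact le_trans this (hclose θ)
        linarith
    rw [h1] at h2
    rw [intervalIntegral.integral_add (hφc.intervalIntegrable _ _)
      (continuous_const.intervalIntegrable _ _), intervalIntegral.integral_const] at h2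
    have h2π : (0:ℝ) < 2*Real.pi := by positivity
    rw [smul_eq_mul, sub_zero] at h2
    have h3 : (c 0).re ≤ ((∫ θ in (0:ℝ)..(2*Real.pi), φ θ) + 2*Real.pi*ε) / (2*Real.pi) := by
      rw [le_div_iff₀ h2π]
      nlinarith
    have h4 : ((∫ θ in (0:ℝ)..(2*Real.pi), φ θ) + 2*Real.pi*ε) / (2*Real.pi) = A + ε := by
      rw [hA]
      field_simp
    linarith
  -- maximum modulus principle
  set h : ℂ → ℂ := fun z => g z * Complex.exp (-Q z) with hh
  have hclosure : closure (Metric.ball (0:ℂ) ρ) = Metric.closedBall 0 ρ :=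
    closure_ball 0 hρ0.ne'
  have hsub : Metric.closedBall (0:ℂ) ρ ⊆ Metric.ball 0 Δ := closedBall_subset_ball hρΔ
  have hdc : DiffContOnCl ℂ h (Metric.ball (0:ℂ) ρ) := by
    apply DifferentiableOn.diffContOnCl
    rw [hclosure]
    exact (hg.mono hsub).mul ((hQdiff.neg.cexp).differentiableOn)
  have hbound : ∀ z ∈ frontier (Metric.ball (0:ℂ) ρ), ‖h z‖ ≤ Real.exp ε := by
    intro z hz
    rw [frontier_ball 0 hρ0.ne'] at hz
    have habs : ‖z‖ = ρ := by
      simpa [Complex.norm_def] using mem_sphere_zero_iff_norm.mp hz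
    have hz' : z = circleMap 0 ρ z.arg := by
      rw [circleMap, zero_add, ← habs]
      exact (Complex.norm_mul_exp_arg_mul_I z).symm
    set θ := z.arg
    have h1 : ‖h z‖ = ‖g z‖ * Real.exp (-(Q z).re) := by
      rw [hh]
      simp [Complex.norm_exp]
    rw [h1, hz']
    have h2 : (Q (circleMap 0 ρ θ)).re ≥ φ θ - ε := by
      rw [hQre θ]
      have := Complex.re_le_norm ((φ θ : ℂ) - f (θ:AddCircle (2*Real.pi)))
      rw [Complex.sub_re, Complex.ofReal_re] at this
      have h4 : ‖(φ θ:ℂ) - f (θ:AddCircle (2*Real.pi))‖ ≤ ε := by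
        rw [norm_sub_rev]; exact hclose θ
      linarith [le_trans this h4]
    calc ‖g (circleMap 0 ρ θ)‖ * Real.exp (-(Q (circleMap 0 ρ θ)).re)
        ≤ Real.exp (φ θ) * Real.exp (-(φ θ - ε)) := by
          apply mul_le_mul (hb θ) (Real.exp_le_exp.mpr (by linarith)) (Real.exp_pos _).le
            (Real.exp_pos _).le
      _ = Real.exp ε := by rw [← Real.exp_add]; ring_nf
  have h0mem : (0:ℂ) ∈ closure (Metric.ball (0:ℂ) ρ) := by
    rw [hclosure]; exact Metric.mem_closedBall_self hρ0.le
  have hmax : ‖h 0‖ ≤ Real.exp ε :=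
    Complex.norm_le_of_forall_mem_frontier_norm_le isBounded_ball hdc hbound h0mem
  have hfinal : ‖g 0‖ = ‖h 0‖ * Real.exp ((Q 0).re) := by
    rw [hh]
    simp only [norm_mul, Complex.norm_exp, Complex.neg_re]
    rw [mul_assoc, ← Real.exp_add]
    simp
  rw [hfinal]
  calc ‖h 0‖ * Real.exp ((Q 0).re) ≤ Real.exp ε * Real.exp ((Q 0).re) := by
        apply mul_le_mul_of_nonneg_right hmax (Real.exp_pos _).le
    _ ≤ Real.exp ε * Real.exp (A + ε) := by
        apply mul_le_mul_of_nonneg_left _ (Real.exp_pos _).le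
        apply Real.exp_le_exp.mpr
        rw [hQ0]; exact hrec0
    _ = Real.exp (A + 2*ε) := by rw [← Real.exp_add]; ring_nf



/-- Key estimate: if `g` is analytic on the open disk of radius `Δ`, and
`|g ω| ≤ F (|Im ω|)` there (off the real axis), then for any `ρ ∈ (0, Δ)` for which
`θ ↦ log (F (ρ sin θ))` is integrable on `(0, π/2)`,
`|g 0| ≤ exp ((2/π) ∫₀^{π/2} log (F (ρ sin θ)) dθ)`. -/
theorem abs_apply_zero_le_exp_average_log_bound
    (Δ : ℝ) (hΔ : 0 < Δ) (g : ℂ → ℂ)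
    (hg : DifferentiableOn ℂ g (Metric.ball (0 : ℂ) Δ))
    (F : ℝ → ℝ) (hFmeas : Measurable F) (hFpos : ∀ y : ℝ, 0 < y → 0 < F y)
    (hbound : ∀ ω : ℂ, ‖ω‖ < Δ → ω.im ≠ 0 → ‖g ω‖ ≤ F |ω.im|)
    (ρ : ℝ) (hρ0 : 0 < ρ) (hρΔ : ρ < Δ)
    (hint : IntervalIntegrable (fun θ : ℝ => Real.log (F (ρ * Real.sin θ)))
      MeasureTheory.volume 0 (Real.pi / 2)) :
    ‖g 0‖ ≤
      Real.exp ((2 / Real.pi) *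
        ∫ θ in (0:ℝ)..(Real.pi / 2), Real.log (F (ρ * Real.sin θ))) := by
  have hπ : (0:ℝ) < Real.pi := Real.pi_pos
  set u : ℝ → ℝ := fun θ => Real.log (F (ρ * Real.sin θ)) with hu
  have humeas : Measurable u :=
    Real.measurable_log.comp (hFmeas.comp (measurable_const.mul Real.measurable_sin))
  set G : ℝ → ℝ → ℝ := fun M θ => max (Real.log (F (ρ * |Real.sin θ|))) (-M) with hG
  -- G agrees with max(u, -M) on [0, π/2]
  have hGu : ∀ M : ℝ, ∀ θ ∈ Set.uIcc (0:ℝ) (Real.pi/2), G M θ = max (u θ) (-M) := by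
    intro M θ hθ
    rw [Set.uIcc_of_le (by positivity)] at hθ
    have hs : |Real.sin θ| = Real.sin θ :=
      abs_of_nonneg (Real.sin_nonneg_of_nonneg_of_le_pi hθ.1 (by linarith [hθ.2]))
    simp only [hG, hs, hu]
  -- integrability of max(u, -M) on [0, π/2]
  have hint2 : ∀ M : ℝ, IntervalIntegrable (fun θ => max (u θ) (-M)) volume 0 (Real.pi/2) := by
    intro M
    have h1 : (fun θ => max (u θ) (-M)) = fun θ => ((u θ + (-M)) + |u θ - (-M)|)/2 := by
      funext θ
      rcases le_total (u θ) (-M) with h | h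
      · rw [max_eq_right h, _root_.abs_of_nonpos (by linarith)]; ring
      · rw [max_eq_left h, _root_.abs_of_nonneg (by linarith)]; ring
    rw [h1]
    exact ((hint.add intervalIntegrable_const).add
      ((hint.sub intervalIntegrable_const).abs)).div_const 2
  -- integrability of G M on [0, π/2]
  have hGint1 : ∀ M : ℝ, IntervalIntegrable (G M) volume 0 (Real.pi/2) := by
    intro M
    have h2 := hint2 M
    rw [intervalIntegrable_iff] at h2 ⊢
    exact h2.congr_fun
      (fun θ hθ => ((hGu M θ (Set.uIoc_subset_uIcc hθ))).symm) measurableSet_uIoc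
  -- symmetry properties of G M
  have hGper : ∀ M : ℝ, Function.Periodic (G M) Real.pi := by
    intro M θ
    simp only [hG, Real.sin_add_pi, abs_neg]
  have href : ∀ M : ℝ, ∀ θ : ℝ, G M (Real.pi - θ) = G M θ := by
    intro M θ
    simp only [hG, Real.sin_pi_sub]
  -- integrability of G M on [π/2, π]
  have hGint2 : ∀ M : ℝ, IntervalIntegrable (G M) volume (Real.pi/2) Real.pi := by
    intro M
    have h1 := (hGint1 M).comp_sub_left Real.pi
    simp only [href M] at h1
    have e1 : Real.pi - Real.pi/2 = Real.pi/2 := by ring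
    rw [e1, sub_zero] at h1
    exact h1.symm
  have hGint0π : ∀ M : ℝ, IntervalIntegrable (G M) volume 0 Real.pi :=
    fun M => (hGint1 M).trans (hGint2 M)
  have hGintπ2π : ∀ M : ℝ, IntervalIntegrable (G M) volume Real.pi (2*Real.pi) := by
    intro M
    have h3 : IntervalIntegrable (fun x => G M (x + Real.pi)) volume 0 Real.pi := by
      simpa only [hGper M _] using hGint0π M
    have h4 := h3.comp_sub_right Real.pi
    simp only [sub_add_cancel] at h4
    rw [zero_add] at h4
    have e2 : Real.pi + Real.pi = 2*Real.pi := by ring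
    rw [e2] at h4
    exact h4
  have hGint : ∀ M : ℝ, IntervalIntegrable (G M) volume 0 (2*Real.pi) :=
    fun M => (hGint0π M).trans (hGintπ2π M)
  -- integral identities
  have hI2 : ∀ M : ℝ, ∫ θ in (Real.pi/2)..Real.pi, G M θ = ∫ θ in (0:ℝ)..(Real.pi/2), G M θ := by
    intro M
    have h1 := intervalIntegral.integral_comp_sub_left (a := 0) (b := Real.pi/2) (G M) Real.pi
    have e1 : Real.pi - Real.pi/2 = Real.pi/2 := by ring
    rw [e1, sub_zero] at h1
    rw [← h1]
    exact intervalIntegral.integral_congr fun θ _ => href M θ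
  have hI3 : ∀ M : ℝ, ∫ θ in (0:ℝ)..Real.pi, G M θ = 2 * ∫ θ in (0:ℝ)..(Real.pi/2), G M θ := by
    intro M
    rw [← intervalIntegral.integral_add_adjacent_intervals (hGint1 M) (hGint2 M), hI2 M]
    ring
  have hI1 : ∀ M : ℝ, ∫ θ in (0:ℝ)..(2*Real.pi), G M θ = 4 * ∫ θ in (0:ℝ)..(Real.pi/2), G M θ := by
    intro M
    rw [← intervalIntegral.integral_add_adjacent_intervals (hGint0π M) (hGintπ2π M)]
    have h1 := (hGper M).intervalIntegral_add_eq Real.pi 0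
    rw [zero_add] at h1
    have e2 : Real.pi + Real.pi = 2*Real.pi := by ring
    rw [e2] at h1
    rw [h1, hI3 M]
    ring
  have hI4 : ∀ M : ℝ, ∫ θ in (0:ℝ)..(Real.pi/2), G M θ
      = ∫ θ in (0:ℝ)..(Real.pi/2), max (u θ) (-M) :=
    fun M => intervalIntegral.integral_congr fun θ hθ => hGu M θ hθ
  -- a.e. statement: sin θ ≠ 0 a.e.
  have hae : ∀ᵐ θ : ℝ ∂volume, Real.sin θ ≠ 0 := by
    have hcover : {θ : ℝ | Real.sin θ = 0} ⊆ Set.range (fun n : ℤ => (n:ℝ) * Real.pi) := by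
      intro θ hθ
      obtain ⟨n, hn⟩ := Real.sin_eq_zero_iff.mp hθ
      exact ⟨n, hn⟩
    have hnull : volume {θ : ℝ | Real.sin θ = 0} = 0 :=
      measure_mono_null hcover (Set.Countable.measure_zero (Set.countable_range _) _)
    have hset : {θ : ℝ | ¬ Real.sin θ ≠ 0} = {θ : ℝ | Real.sin θ = 0} := by
      ext θ; simp [not_not]
    rw [MeasureTheory.ae_iff, hset]
    exact hnull
  -- key estimate for each M
  have key : ∀ M : ℝ, ‖g 0‖ ≤
      Real.exp ((2/Real.pi) * ∫ θ in (0:ℝ)..(Real.pi/2), max (u θ) (-M)) := by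
    intro M
    have hgc : Continuous fun θ : ℝ => g (circleMap 0 ρ θ) := by
      apply hg.continuousOn.comp_continuous (continuous_circleMap 0 ρ)
      intro θ
      rw [mem_ball_zero_iff]
      calc ‖circleMap 0 ρ θ‖ = |ρ| := by rw [norm_circleMap_zero]
        _ = ρ := _root_.abs_of_pos hρ0
        _ < Δ := hρΔ
    have hinnerc : Continuous fun θ : ℝ =>
        max (‖g (circleMap 0 ρ θ)‖) (Real.exp (-M)) :=
      (continuous_norm.comp hgc).max continuous_const
    have hinnerpos : ∀ θ : ℝ,
        0 < max (‖g (circleMap 0 ρ θ)‖) (Real.exp (-M)) :=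
      fun θ => lt_of_lt_of_le (Real.exp_pos _) (le_max_right _ _)
    set ψ : ℝ → ℝ := fun θ =>
      Real.log (max (‖g (circleMap 0 ρ θ)‖) (Real.exp (-M))) with hψ
    have hψc : Continuous ψ := by
      apply Real.continuousOn_log.comp_continuous hinnerc
      intro θ
      exact Set.mem_compl_singleton_iff.mpr (hinnerpos θ).ne'
    have hψper : Function.Periodic ψ (2*Real.pi) := by
      intro θ
      simp only [hψ, (periodic_circleMap 0 ρ) θ]
    have hψb : ∀ θ : ℝ, ‖g (circleMap 0 ρ θ)‖ ≤ Real.exp (ψ θ) := by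
      intro θ
      rw [hψ, Real.exp_log (hinnerpos θ)]
      exact le_max_left _ _
    have h0 := lemA hρ0 hρΔ hg hψc hψper hψb
    -- pointwise comparison
    have hpt : ∀ θ : ℝ, Real.sin θ ≠ 0 → ψ θ ≤ G M θ := by
      intro θ hθ
      set z := circleMap 0 ρ θ with hz
      have habs : ‖z‖ = ρ := by rw [hz, norm_circleMap_zero, _root_.abs_of_pos hρ0]
      have him : z.im = ρ * Real.sin θ := by
        simp [hz, circleMap, Complex.exp_ofReal_mul_I_im]
      have him' : |z.im| = ρ * |Real.sin θ| := by
        rw [him, abs_mul, _root_.abs_of_pos hρ0]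
      have himne : z.im ≠ 0 := by
        rw [him]; exact mul_ne_zero hρ0.ne' hθ
      have hsinpos : 0 < |Real.sin θ| := abs_pos.mpr hθ
      have hFz : 0 < F (ρ * |Real.sin θ|) := hFpos _ (by positivity)
      have hgb : ‖g z‖ ≤ F (ρ * |Real.sin θ|) := by
        rw [← him']
        exact hbound z (by rw [habs]; exact hρΔ) himne
      have hmax : max (‖g z‖) (Real.exp (-M))
          ≤ max (F (ρ * |Real.sin θ|)) (Real.exp (-M)) :=
        max_le_max hgb le_rfl
      have hlogmax : Real.log (max (F (ρ * |Real.sin θ|)) (Real.exp (-M)))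
          = max (Real.log (F (ρ * |Real.sin θ|))) (-M) := by
        rcases le_total (F (ρ * |Real.sin θ|)) (Real.exp (-M)) with h | h
        · rw [max_eq_right h, Real.log_exp, max_eq_right]
          calc Real.log (F (ρ * |Real.sin θ|)) ≤ Real.log (Real.exp (-M)) :=
                Real.log_le_log hFz h
            _ = -M := Real.log_exp _
        · rw [max_eq_left h, max_eq_left]
          calc (-M) = Real.log (Real.exp (-M)) := (Real.log_exp _).symm
            _ ≤ Real.log (F (ρ * |Real.sin θ|)) := Real.log_le_log (Real.exp_pos _) h
      calc ψ θ ≤ Real.log (max (F (ρ * |Real.sin θ|)) (Real.exp (-M))) :=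
            Real.log_le_log (hinnerpos θ) hmax
        _ = G M θ := by rw [hlogmax]
    have hcmp : (∫ θ in (0:ℝ)..(2*Real.pi), ψ θ) ≤ ∫ θ in (0:ℝ)..(2*Real.pi), G M θ := by
      apply intervalIntegral.integral_mono_ae (by positivity)
        (hψc.intervalIntegrable _ _) (hGint M)
      filter_upwards [hae] with θ hθ
      exact hpt θ hθ
    calc ‖g 0‖
        ≤ Real.exp ((2*Real.pi)⁻¹ * ∫ θ in (0:ℝ)..(2*Real.pi), ψ θ) := h0
      _ ≤ Real.exp ((2*Real.pi)⁻¹ * ∫ θ in (0:ℝ)..(2*Real.pi), G M θ) := by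
          apply Real.exp_le_exp.mpr
          apply mul_le_mul_of_nonneg_left hcmp (by positivity)
      _ = Real.exp ((2/Real.pi) * ∫ θ in (0:ℝ)..(Real.pi/2), max (u θ) (-M)) := by
          rw [hI1 M, hI4 M]
          congr 1
          field_simp
          ring
  -- pass to the limit M = n → ∞
  have hle : (0:ℝ) ≤ Real.pi/2 := by positivity
  have huint : IntegrableOn u (Set.Ioc 0 (Real.pi/2)) volume :=
    (intervalIntegrable_iff_integrableOn_Ioc_of_le hle).mp hint
  have hmax0int : IntegrableOn (fun θ => max (u θ) 0) (Set.Ioc 0 (Real.pi/2)) volume := by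
    have := hint2 0
    rw [neg_zero] at this
    exact (intervalIntegrable_iff_integrableOn_Ioc_of_le hle).mp this
  have hlim : Filter.Tendsto (fun n : ℕ => ∫ θ in (0:ℝ)..(Real.pi/2), max (u θ) (-(n:ℝ)))
      Filter.atTop (nhds (∫ θ in (0:ℝ)..(Real.pi/2), u θ)) := by
    simp only [intervalIntegral.integral_of_le hle]
    apply MeasureTheory.tendsto_integral_of_dominated_convergence
      (fun θ => |u θ| + |max (u θ) 0|)
    · intro n
      exact ((humeas.max measurable_const).aestronglyMeasurable)
    · exact huint.abs.add hmax0int.abs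
    · intro n
      apply Filter.Eventually.of_forall
      intro θ
      rw [Real.norm_eq_abs]
      have h1 : u θ ≤ max (u θ) (-(n:ℝ)) := le_max_left _ _
      have h2 : max (u θ) (-(n:ℝ)) ≤ max (u θ) 0 := max_le_max le_rfl (neg_nonpos.mpr (Nat.cast_nonneg n))
      rw [abs_le]
      constructor
      · calc -(|u θ| + |max (u θ) 0|) ≤ -|u θ| := by
              have := abs_nonneg (max (u θ) 0); linarith
          _ ≤ u θ := neg_abs_le _
          _ ≤ _ := h1
      · calc max (u θ) (-(n:ℝ)) ≤ max (u θ) 0 := h2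
          _ ≤ |max (u θ) 0| := le_abs_self _
          _ ≤ |u θ| + |max (u θ) 0| := le_add_of_nonneg_left (abs_nonneg _)
    · apply Filter.Eventually.of_forall
      intro θ
      have hev : ∀ᶠ n : ℕ in Filter.atTop, max (u θ) (-(n:ℝ)) = u θ := by
        filter_upwards [Filter.eventually_ge_atTop ⌈-u θ⌉₊] with n hn
        apply max_eq_left
        have h1 : -u θ ≤ (⌈-u θ⌉₊ : ℝ) := Nat.le_ceil _
        have h2 : ((⌈-u θ⌉₊ : ℕ) : ℝ) ≤ (n : ℝ) := Nat.cast_le.mpr hn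
        linarith
      exact Filter.Tendsto.congr' (hev.mono fun n hn => hn.symm) tendsto_const_nhds
  have hlim2 : Filter.Tendsto
      (fun n : ℕ => Real.exp ((2/Real.pi) * ∫ θ in (0:ℝ)..(Real.pi/2), max (u θ) (-(n:ℝ))))
      Filter.atTop
      (nhds (Real.exp ((2/Real.pi) * ∫ θ in (0:ℝ)..(Real.pi/2), u θ))) :=
    (Real.continuous_exp.tendsto _).comp ((hlim.const_mul _))
  exact ge_of_tendsto hlim2 (Filter.Eventually.of_forall fun n => key (n:ℝ))
end

section
/- Let η, ζ be real numbers with 0 < η ≤ ζ and let k be a natural number. Then there exists a constant c₂ > 0 such that for every integer R ≥ 2 the following hold: (i) if ζ ≥ 1 then Σ_{r=1}^{R−1} (1 + log r)^k / ( r^ζ · (R − r)^η ) ≤ c₂ · (1 + log R)^{k+1} · R^{−η}; (ii) if ζ < 1 then Σ_{r=1}^{R−1} (1 + log r)^k / ( r^ζ · (R − r)^η ) ≤ c₂ · (1 + log R)^k · R^{1−η−ζ}. -/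
open Finset

private lemma sum_inv_le_log (m : ℕ) :
    ∑ r ∈ Icc 1 m, ((r : ℝ))⁻¹ ≤ 1 + Real.log m := by
  have h := harmonic_le_one_add_log m
  rw [harmonic_eq_sum_Icc] at h
  calc ∑ r ∈ Icc 1 m, ((r : ℝ))⁻¹
      = ((∑ i ∈ Icc 1 m, ((i : ℚ))⁻¹ : ℚ) : ℝ) := by push_cast; rfl
    _ ≤ 1 + Real.log m := by exact_mod_cast h

private lemma sum_rpow_le_log {a : ℝ} (ha : 1 ≤ a) (m : ℕ) :
    ∑ r ∈ Icc 1 m, (r : ℝ) ^ (-a) ≤ 1 + Real.log m := by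
  refine le_trans (Finset.sum_le_sum ?_) (sum_inv_le_log m)
  intro r hr
  have hr1 : (1:ℝ) ≤ r := by exact_mod_cast (Finset.mem_Icc.mp hr).1
  calc (r:ℝ) ^ (-a) ≤ (r:ℝ) ^ (-1 : ℝ) :=
        Real.rpow_le_rpow_of_exponent_le hr1 (by linarith)
    _ = ((r:ℝ))⁻¹ := by rw [Real.rpow_neg_one]

private lemma sum_rpow_lt_one {a : ℝ} (ha : 0 < a) (ha1 : a < 1) (m : ℕ) :
    ∑ r ∈ Icc 1 m, (r : ℝ) ^ (-a) ≤ (m:ℝ) ^ (1 - a) / (1 - a) := by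
  have hp : (0:ℝ) < 1 - a := by linarith
  rw [le_div_iff₀ hp]
  have key : ∀ i : ℕ, (((i:ℕ):ℝ) + 1) ^ (-a) * (1 - a)
      ≤ (((i:ℕ):ℝ) + 1) ^ (1 - a) - ((i:ℕ):ℝ) ^ (1 - a) := by
    intro i
    set x : ℝ := (i:ℝ) + 1 with hx
    have hx1 : (1:ℝ) ≤ x := by have := Nat.cast_nonneg (α:=ℝ) i; linarith
    have hx0 : (0:ℝ) < x := by linarith
    have hs : (-1:ℝ) ≤ -x⁻¹ := by
      have : x⁻¹ ≤ 1 := by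
        rw [inv_le_one_iff₀]; right; exact hx1
      linarith
    have hb := rpow_one_add_le_one_add_mul_self (s := -x⁻¹) hs
      (p := 1 - a) (by linarith) (by linarith)
    have h1 : (1 + -x⁻¹) ^ (1-a) * x ^ (1-a) = (x - 1) ^ (1-a) := by
      rw [← Real.mul_rpow (by nlinarith [hs]) hx0.le]
      congr 1
      field_simp
      ring
    have h2 : x ^ (1-a) * x⁻¹ = x ^ (-a) := by
      rw [← Real.rpow_neg_one x, ← Real.rpow_add hx0]
      congr 1; ring
    have hmul := mul_le_mul_of_nonneg_right hb (Real.rpow_nonneg hx0.le (1-a))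
    rw [h1] at hmul
    have h3 : (1 + (1-a) * -x⁻¹) * x ^ (1-a) = x ^ (1-a) - (1-a) * x ^ (-a) := by
      rw [← h2]; ring
    rw [h3] at hmul
    have h4 : (i:ℝ) = x - 1 := by rw [hx]; ring
    rw [h4]
    linarith
  calc (∑ r ∈ Icc 1 m, (r:ℝ) ^ (-a)) * (1 - a)
      = ∑ i ∈ Finset.range m, ((i:ℝ) + 1) ^ (-a) * (1 - a) := by
        rw [← Finset.sum_mul]
        congr 1
        rw [← Finset.Ico_add_one_right_eq_Icc, Finset.sum_Ico_eq_sum_range]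
        simp [add_comm]
    _ ≤ ∑ i ∈ Finset.range m, (((i+1:ℕ):ℝ) ^ (1-a) - ((i:ℕ):ℝ) ^ (1-a)) := by
        refine Finset.sum_le_sum fun i _ => ?_
        have := key i
        push_cast
        convert this using 2 <;> push_cast <;> ring
    _ = (m:ℝ) ^ (1-a) - ((0:ℕ):ℝ) ^ (1-a) :=
        Finset.sum_range_sub (fun i : ℕ => ((i:ℕ):ℝ) ^ (1-a)) m
    _ ≤ (m:ℝ) ^ (1-a) := by
        simp [Real.zero_rpow hp.ne']

private lemma sum_reflect (g : ℝ → ℝ) (R : ℕ) :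
    ∑ r ∈ Icc 1 (R-1), g ((R:ℝ) - (r:ℝ)) = ∑ s ∈ Icc 1 (R-1), g (s:ℝ) := by
  refine Finset.sum_nbij' (i := fun r => R - r) (j := fun s => R - s) ?_ ?_ ?_ ?_ ?_
  all_goals intro a ha
  all_goals simp only [Finset.mem_Icc] at *
  · omega
  · omega
  · omega
  · omega
  · congr 1
    exact (Nat.cast_sub (by omega : a ≤ R)).symm

private lemma core_bound (η ζ : ℝ) (hη : 0 < η) (hζ : 0 < ζ) (k R : ℕ) (hR : 2 ≤ R) :
    ∑ r ∈ Icc 1 (R-1), (1 + Real.log r) ^ k / ((r:ℝ) ^ ζ * ((R:ℝ) - (r:ℝ)) ^ η)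
      ≤ (1 + Real.log R) ^ k *
        ((2:ℝ) ^ η * (R:ℝ) ^ (-η) * ∑ r ∈ Icc 1 (R-1), (r:ℝ) ^ (-ζ)
         + (2:ℝ) ^ ζ * (R:ℝ) ^ (-ζ) * ∑ r ∈ Icc 1 (R-1), (r:ℝ) ^ (-η)) := by
  have hRpos : (0:ℝ) < R := by positivity
  have hsum2 : ∑ r ∈ Icc 1 (R-1), ((R:ℝ) - (r:ℝ)) ^ (-η)
      = ∑ r ∈ Icc 1 (R-1), (r:ℝ) ^ (-η) := by
    refine Finset.sum_nbij' (i := fun r => R - r) (j := fun s => R - s) ?_ ?_ ?_ ?_ ?_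
    all_goals intro a ha
    all_goals simp only [Finset.mem_Icc] at *
    · omega
    · omega
    · omega
    · omega
    · congr 1
      exact (Nat.cast_sub (by omega : a ≤ R)).symm
  rw [← hsum2, Finset.mul_sum, Finset.mul_sum, ← Finset.sum_add_distrib, Finset.mul_sum]
  refine Finset.sum_le_sum fun r hr => ?_
  obtain ⟨hr1, hr2⟩ := Finset.mem_Icc.mp hr
  have hx1 : (1:ℝ) ≤ (r:ℝ) := by exact_mod_cast hr1
  have hxR : (r:ℝ) ≤ (R:ℝ) - 1 := by
    have : ((r:ℕ):ℝ) ≤ ((R-1:ℕ):ℝ) := by exact_mod_cast hr2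
    rwa [Nat.cast_sub (by omega), Nat.cast_one] at this
  set x : ℝ := (r:ℝ) with hxdef
  set y : ℝ := (R:ℝ) - x with hydef
  have hy1 : (1:ℝ) ≤ y := by simp only [hydef]; linarith
  have hx0 : (0:ℝ) < x := by linarith
  have hy0 : (0:ℝ) < y := by linarith
  -- log factor
  have hlog : (1 + Real.log x) ^ k ≤ (1 + Real.log R) ^ k := by
    refine pow_le_pow_left₀ (by have := Real.log_nonneg hx1; linarith) ?_ k
    have : Real.log x ≤ Real.log R := Real.log_le_log hx0 (by linarith)
    linarith
  have hlog0 : (0:ℝ) ≤ 1 + Real.log x := by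
    have := Real.log_nonneg hx1; linarith
  -- main product bound
  have hkey : x ^ (-ζ) * y ^ (-η) ≤
      (2:ℝ) ^ η * (R:ℝ) ^ (-η) * x ^ (-ζ) + (2:ℝ) ^ ζ * (R:ℝ) ^ (-ζ) * y ^ (-η) := by
    have half : (R:ℝ)/2 ≤ x ∨ (R:ℝ)/2 ≤ y := by
      rcases le_total x ((R:ℝ)/2) with h | h
      · right; simp only [hydef]; linarith
      · left; exact h
    have hhalf0 : (0:ℝ) < (R:ℝ)/2 := by linarith
    rcases half with h | h
    · -- x ≥ R/2 : x^{-ζ} ≤ 2^ζ R^{-ζ}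
      have h1 : x ^ (-ζ) ≤ ((R:ℝ)/2) ^ (-ζ) := by
        rw [Real.rpow_neg hx0.le, Real.rpow_neg hhalf0.le]
        exact inv_anti₀ (Real.rpow_pos_of_pos hhalf0 ζ)
          (Real.rpow_le_rpow hhalf0.le h hζ.le)
      have h2 : ((R:ℝ)/2) ^ (-ζ) = (2:ℝ) ^ ζ * (R:ℝ) ^ (-ζ) := by
        rw [Real.div_rpow hRpos.le (by norm_num), Real.rpow_neg (by norm_num : (0:ℝ) ≤ 2),
          div_eq_mul_inv, inv_inv, mul_comm]
      have h3 : x ^ (-ζ) * y ^ (-η) ≤ (2:ℝ) ^ ζ * (R:ℝ) ^ (-ζ) * y ^ (-η) := by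
        refine mul_le_mul_of_nonneg_right ?_ (Real.rpow_nonneg hy0.le _)
        rw [← h2]; exact h1
      have h4 : (0:ℝ) ≤ (2:ℝ) ^ η * (R:ℝ) ^ (-η) * x ^ (-ζ) := by positivity
      linarith
    · -- y ≥ R/2 : y^{-η} ≤ 2^η R^{-η}
      have h1 : y ^ (-η) ≤ ((R:ℝ)/2) ^ (-η) := by
        rw [Real.rpow_neg hy0.le, Real.rpow_neg hhalf0.le]
        exact inv_anti₀ (Real.rpow_pos_of_pos hhalf0 η)
          (Real.rpow_le_rpow hhalf0.le h hη.le)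
      have h2 : ((R:ℝ)/2) ^ (-η) = (2:ℝ) ^ η * (R:ℝ) ^ (-η) := by
        rw [Real.div_rpow hRpos.le (by norm_num), Real.rpow_neg (by norm_num : (0:ℝ) ≤ 2),
          div_eq_mul_inv, inv_inv, mul_comm]
      have h3 : x ^ (-ζ) * y ^ (-η) ≤ x ^ (-ζ) * ((2:ℝ) ^ η * (R:ℝ) ^ (-η)) := by
        refine mul_le_mul_of_nonneg_left ?_ (Real.rpow_nonneg hx0.le _)
        rw [← h2]; exact h1
      have h4 : (0:ℝ) ≤ (2:ℝ) ^ ζ * (R:ℝ) ^ (-ζ) * y ^ (-η) := by positivity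
      nlinarith [Real.rpow_nonneg hx0.le (-ζ), Real.rpow_nonneg hy0.le (-η)]
  have hdiv : (1 + Real.log x) ^ k / (x ^ ζ * y ^ η)
      = (1 + Real.log x) ^ k * (x ^ (-ζ) * y ^ (-η)) := by
    rw [Real.rpow_neg hx0.le, Real.rpow_neg hy0.le, div_eq_mul_inv, mul_inv]
  rw [hdiv]
  calc (1 + Real.log x) ^ k * (x ^ (-ζ) * y ^ (-η))
      ≤ (1 + Real.log R) ^ k *
        ((2:ℝ) ^ η * (R:ℝ) ^ (-η) * x ^ (-ζ) + (2:ℝ) ^ ζ * (R:ℝ) ^ (-ζ) * y ^ (-η)) := by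
        have h1R : (1:ℝ) ≤ (R:ℝ) := by exact_mod_cast (by omega : 1 ≤ R)
        have hlogR0 : (0:ℝ) ≤ 1 + Real.log R := by have := Real.log_nonneg h1R; linarith
        refine mul_le_mul hlog hkey (by positivity) (pow_nonneg hlogR0 k)

/-- Upper-bound half of the convolution-sum lemma (Lemma 2 of the paper), with
polynomial prefactor `P(x) = (1+x)^k`. -/
theorem convolution_sum_upper_bound
    (η ζ : ℝ) (hη : 0 < η) (hηζ : η ≤ ζ) (k : ℕ) :
    ∃ c₂ : ℝ, 0 < c₂ ∧ ∀ R : ℕ, 2 ≤ R →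
      ((1 ≤ ζ →
        ∑ r ∈ Finset.Icc 1 (R - 1),
            (1 + Real.log r) ^ k / ((r : ℝ) ^ ζ * ((R : ℝ) - (r : ℝ)) ^ η)
          ≤ c₂ * (1 + Real.log R) ^ (k + 1) * (R : ℝ) ^ (-η)) ∧
       (ζ < 1 →
        ∑ r ∈ Finset.Icc 1 (R - 1),
            (1 + Real.log r) ^ k / ((r : ℝ) ^ ζ * ((R : ℝ) - (r : ℝ)) ^ η)
          ≤ c₂ * (1 + Real.log R) ^ k * (R : ℝ) ^ (1 - η - ζ))) := by
  have hζ : 0 < ζ := lt_of_lt_of_le hη hηζ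
  by_cases hζ1 : 1 ≤ ζ
  · by_cases hη1 : 1 ≤ η
    · -- both exponents ≥ 1
      refine ⟨(2:ℝ)^η + (2:ℝ)^ζ, by positivity, fun R hR => ⟨fun _ => ?_,
        fun h => absurd hζ1 (not_le.mpr h)⟩⟩
      have hRpos : (0:ℝ) < R := by positivity
      have h1R : (1:ℝ) ≤ (R:ℝ) := by exact_mod_cast (by omega : 1 ≤ R)
      set L : ℝ := 1 + Real.log R with hLdef
      have hL : (1:ℝ) ≤ L := by have := Real.log_nonneg h1R; simp [hLdef]; linarith
      have hlogmono : Real.log ((R-1:ℕ):ℝ) ≤ Real.log R := by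
        refine Real.log_le_log (by exact_mod_cast (by omega : 1 ≤ R - 1)) ?_
        exact_mod_cast (by omega : R - 1 ≤ R)
      have hA : ∑ r ∈ Icc 1 (R-1), (r:ℝ) ^ (-ζ) ≤ L := by
        refine le_trans (sum_rpow_le_log hζ1 (R-1)) ?_
        simp only [hLdef]; linarith
      have hB : ∑ r ∈ Icc 1 (R-1), (r:ℝ) ^ (-η) ≤ L := by
        refine le_trans (sum_rpow_le_log hη1 (R-1)) ?_
        simp only [hLdef]; linarith
      have hexp : (R:ℝ) ^ (-ζ) ≤ (R:ℝ) ^ (-η) :=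
        Real.rpow_le_rpow_of_exponent_le h1R (by linarith)
      calc ∑ r ∈ Icc 1 (R-1), (1 + Real.log r) ^ k / ((r:ℝ) ^ ζ * ((R:ℝ) - (r:ℝ)) ^ η)
          ≤ L ^ k * ((2:ℝ)^η * (R:ℝ)^(-η) * ∑ r ∈ Icc 1 (R-1), (r:ℝ)^(-ζ)
            + (2:ℝ)^ζ * (R:ℝ)^(-ζ) * ∑ r ∈ Icc 1 (R-1), (r:ℝ)^(-η)) :=
            core_bound η ζ hη hζ k R hR
        _ ≤ L ^ k * ((2:ℝ)^η * (R:ℝ)^(-η) * L + (2:ℝ)^ζ * (R:ℝ)^(-η) * L) := by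
            gcongr
        _ = ((2:ℝ)^η + (2:ℝ)^ζ) * L ^ (k+1) * (R:ℝ)^(-η) := by ring
    · -- ζ ≥ 1 > η
      have hη1' : η < 1 := lt_of_not_ge hη1
      have h1η : (0:ℝ) < 1 - η := by linarith
      refine ⟨(2:ℝ)^η + (2:ℝ)^ζ / (1-η),
        add_pos (by positivity) (div_pos (by positivity) h1η), fun R hR =>
        ⟨fun _ => ?_, fun h => absurd hζ1 (not_le.mpr h)⟩⟩
      have hRpos : (0:ℝ) < R := by positivity
      have h1R : (1:ℝ) ≤ (R:ℝ) := by exact_mod_cast (by omega : 1 ≤ R)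
      set L : ℝ := 1 + Real.log R with hLdef
      have hL : (1:ℝ) ≤ L := by have := Real.log_nonneg h1R; simp [hLdef]; linarith
      have hlogmono : Real.log ((R-1:ℕ):ℝ) ≤ Real.log R := by
        refine Real.log_le_log (by exact_mod_cast (by omega : 1 ≤ R - 1)) ?_
        exact_mod_cast (by omega : R - 1 ≤ R)
      have hA : ∑ r ∈ Icc 1 (R-1), (r:ℝ) ^ (-ζ) ≤ L := by
        refine le_trans (sum_rpow_le_log hζ1 (R-1)) ?_
        simp only [hLdef]; linarith
      have hB : ∑ r ∈ Icc 1 (R-1), (r:ℝ) ^ (-η) ≤ (R:ℝ)^(1-η) / (1-η) := by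
        refine le_trans (sum_rpow_lt_one hη hη1' (R-1)) ?_
        gcongr <;> first | omega | positivity
      have hpow : (R:ℝ)^(-ζ) * (R:ℝ)^(1-η) ≤ (R:ℝ)^(-η) := by
        rw [← Real.rpow_add hRpos]
        exact Real.rpow_le_rpow_of_exponent_le h1R (by linarith)
      have hc : (0:ℝ) ≤ (2:ℝ)^ζ / (1-η) := le_of_lt (div_pos (by positivity) h1η)
      calc ∑ r ∈ Icc 1 (R-1), (1 + Real.log r) ^ k / ((r:ℝ) ^ ζ * ((R:ℝ) - (r:ℝ)) ^ η)
          ≤ L ^ k * ((2:ℝ)^η * (R:ℝ)^(-η) * ∑ r ∈ Icc 1 (R-1), (r:ℝ)^(-ζ)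
            + (2:ℝ)^ζ * (R:ℝ)^(-ζ) * ∑ r ∈ Icc 1 (R-1), (r:ℝ)^(-η)) :=
            core_bound η ζ hη hζ k R hR
        _ ≤ L ^ k * ((2:ℝ)^η * (R:ℝ)^(-η) * L
            + (2:ℝ)^ζ * (R:ℝ)^(-ζ) * ((R:ℝ)^(1-η) / (1-η))) := by gcongr
        _ = L ^ k * ((2:ℝ)^η * (R:ℝ)^(-η) * L)
            + L ^ k * (((2:ℝ)^ζ / (1-η)) * ((R:ℝ)^(-ζ) * (R:ℝ)^(1-η))) := by ring
        _ ≤ L ^ (k+1) * ((2:ℝ)^η * (R:ℝ)^(-η))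
            + L ^ (k+1) * (((2:ℝ)^ζ / (1-η)) * (R:ℝ)^(-η)) := by
            refine add_le_add (le_of_eq (by ring)) ?_
            have h1 : L ^ k ≤ L ^ (k+1) := pow_le_pow_right₀ hL (by omega)
            have h2 : ((2:ℝ)^ζ / (1-η)) * ((R:ℝ)^(-ζ) * (R:ℝ)^(1-η))
                ≤ ((2:ℝ)^ζ / (1-η)) * (R:ℝ)^(-η) := mul_le_mul_of_nonneg_left hpow hc
            refine mul_le_mul h1 h2 ?_ (by positivity)
            positivity
        _ = ((2:ℝ)^η + (2:ℝ)^ζ / (1-η)) * L ^ (k+1) * (R:ℝ)^(-η) := by ring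
  · -- ζ < 1 (hence η < 1)
    have hζ1' : ζ < 1 := lt_of_not_ge hζ1
    have hη1' : η < 1 := lt_of_le_of_lt hηζ hζ1'
    have h1ζ : (0:ℝ) < 1 - ζ := by linarith
    have h1η : (0:ℝ) < 1 - η := by linarith
    refine ⟨(2:ℝ)^η / (1-ζ) + (2:ℝ)^ζ / (1-η),
      add_pos (div_pos (by positivity) h1ζ) (div_pos (by positivity) h1η), fun R hR =>
      ⟨fun h => absurd hζ1' (not_lt.mpr h), fun _ => ?_⟩⟩
    have hRpos : (0:ℝ) < R := by positivity
    have h1R : (1:ℝ) ≤ (R:ℝ) := by exact_mod_cast (by omega : 1 ≤ R)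
    set L : ℝ := 1 + Real.log R with hLdef
    have hL : (1:ℝ) ≤ L := by have := Real.log_nonneg h1R; simp [hLdef]; linarith
    have hcast : ((R-1:ℕ):ℝ) ≤ (R:ℝ) := by exact_mod_cast (by omega : R - 1 ≤ R)
    have hA : ∑ r ∈ Icc 1 (R-1), (r:ℝ) ^ (-ζ) ≤ (R:ℝ)^(1-ζ) / (1-ζ) := by
      refine le_trans (sum_rpow_lt_one hζ hζ1' (R-1)) ?_
      gcongr <;> first | omega | positivity
    have hB : ∑ r ∈ Icc 1 (R-1), (r:ℝ) ^ (-η) ≤ (R:ℝ)^(1-η) / (1-η) := by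
      refine le_trans (sum_rpow_lt_one hη hη1' (R-1)) ?_
      gcongr <;> first | omega | positivity
    have e1 : (R:ℝ)^(-η) * (R:ℝ)^(1-ζ) = (R:ℝ)^(1-η-ζ) := by
      rw [← Real.rpow_add hRpos]; congr 1; ring
    have e2 : (R:ℝ)^(-ζ) * (R:ℝ)^(1-η) = (R:ℝ)^(1-η-ζ) := by
      rw [← Real.rpow_add hRpos]; congr 1; ring
    calc ∑ r ∈ Icc 1 (R-1), (1 + Real.log r) ^ k / ((r:ℝ) ^ ζ * ((R:ℝ) - (r:ℝ)) ^ η)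
        ≤ L ^ k * ((2:ℝ)^η * (R:ℝ)^(-η) * ∑ r ∈ Icc 1 (R-1), (r:ℝ)^(-ζ)
          + (2:ℝ)^ζ * (R:ℝ)^(-ζ) * ∑ r ∈ Icc 1 (R-1), (r:ℝ)^(-η)) :=
          core_bound η ζ hη hζ k R hR
      _ ≤ L ^ k * ((2:ℝ)^η * (R:ℝ)^(-η) * ((R:ℝ)^(1-ζ) / (1-ζ))
          + (2:ℝ)^ζ * (R:ℝ)^(-ζ) * ((R:ℝ)^(1-η) / (1-η))) := by gcongr
      _ = L ^ k * (((2:ℝ)^η / (1-ζ)) * ((R:ℝ)^(-η) * (R:ℝ)^(1-ζ))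
          + ((2:ℝ)^ζ / (1-η)) * ((R:ℝ)^(-ζ) * (R:ℝ)^(1-η))) := by ring
      _ = L ^ k * (((2:ℝ)^η / (1-ζ)) * (R:ℝ)^(1-η-ζ)
          + ((2:ℝ)^ζ / (1-η)) * (R:ℝ)^(1-η-ζ)) := by rw [e1, e2]
      _ = ((2:ℝ)^η / (1-ζ) + (2:ℝ)^ζ / (1-η)) * L ^ k * (R:ℝ)^(1-η-ζ) := by ring
end

section
/- Let η, ζ be real numbers with 0 < η ≤ ζ and let k be a natural number. Then there exists a constant c₁ > 0 such that for every integer R ≥ 2 the following hold: (i) if ζ ≥ 1 then Σ_{r=1}^{R−1} (1 + log r)^k / ( r^ζ · (R − r)^η ) ≥ c₁ · R^{−η}; (ii) if ζ < 1 then Σ_{r=1}^{R−1} (1 + log r)^k / ( r^ζ · (R − r)^η ) ≥ c₁ · R^{1−η−ζ}. -/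
open Finset

/-- Lower-bound half of the convolution-sum lemma (Lemma 2 of the paper), with
polynomial prefactor `P(x) = (1+x)^k`. -/
theorem convolution_sum_lower_bound
    (η ζ : ℝ) (hη : 0 < η) (hηζ : η ≤ ζ) (k : ℕ) :
    ∃ c₁ : ℝ, 0 < c₁ ∧ ∀ R : ℕ, 2 ≤ R →
      ((1 ≤ ζ →
        c₁ * (R : ℝ) ^ (-η) ≤
          ∑ r ∈ Finset.Icc 1 (R - 1),
            (1 + Real.log r) ^ k / ((r : ℝ) ^ ζ * ((R : ℝ) - (r : ℝ)) ^ η)) ∧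
       (ζ < 1 →
        c₁ * (R : ℝ) ^ (1 - η - ζ) ≤
          ∑ r ∈ Finset.Icc 1 (R - 1),
            (1 + Real.log r) ^ k / ((r : ℝ) ^ ζ * ((R : ℝ) - (r : ℝ)) ^ η))) := by
  refine ⟨1/2, by norm_num, fun R hR => ?_⟩
  have hζ0 : (0:ℝ) ≤ ζ := le_of_lt (lt_of_lt_of_le hη hηζ)
  have hR2 : (2:ℝ) ≤ (R:ℝ) := by exact_mod_cast hR
  have hRpos : (0:ℝ) < R := by linarith
  -- basic facts about terms in the range
  have hmem : ∀ r ∈ Finset.Icc 1 (R-1),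
      1 ≤ (r:ℝ) ∧ (r:ℝ) ≤ (R:ℝ) - 1 := by
    intro r hr
    rw [Finset.mem_Icc] at hr
    constructor
    · exact_mod_cast hr.1
    · have : r + 1 ≤ R := by omega
      have : (r:ℝ) + 1 ≤ (R:ℝ) := by exact_mod_cast this
      linarith
  have hterm_lb : ∀ r ∈ Finset.Icc 1 (R-1),
      1 / ((R:ℝ) ^ ζ * (R:ℝ) ^ η) ≤
        (1 + Real.log r) ^ k / ((r:ℝ) ^ ζ * ((R:ℝ) - (r:ℝ)) ^ η) := by
    intro r hr
    obtain ⟨hr1, hrR⟩ := hmem r hr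
    have hrpos : (0:ℝ) < r := by linarith
    have hRr : (0:ℝ) < (R:ℝ) - r := by linarith
    have hlog : 0 ≤ Real.log r := Real.log_nonneg hr1
    have hP : (1:ℝ) ≤ (1 + Real.log r) ^ k := one_le_pow₀ (by linarith)
    have hA : (r:ℝ) ^ ζ ≤ (R:ℝ) ^ ζ :=
      Real.rpow_le_rpow (le_of_lt hrpos) (by linarith) hζ0
    have hB : ((R:ℝ) - r) ^ η ≤ (R:ℝ) ^ η :=
      Real.rpow_le_rpow (le_of_lt hRr) (by linarith) (le_of_lt hη)
    have hABpos : 0 < (r:ℝ) ^ ζ * ((R:ℝ) - r) ^ η :=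
      mul_pos (Real.rpow_pos_of_pos hrpos ζ) (Real.rpow_pos_of_pos hRr η)
    exact div_le_div₀ (le_trans zero_le_one hP) hP hABpos
      (mul_le_mul hA hB (le_of_lt (Real.rpow_pos_of_pos hRr η))
        (le_of_lt (Real.rpow_pos_of_pos hRpos ζ)))
  have hterm_nonneg : ∀ r ∈ Finset.Icc 1 (R-1),
      (0:ℝ) ≤ (1 + Real.log r) ^ k / ((r:ℝ) ^ ζ * ((R:ℝ) - (r:ℝ)) ^ η) := by
    intro r hr
    exact le_trans (le_of_lt (by positivity)) (hterm_lb r hr)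
  constructor
  · intro _
    -- bound by the r = 1 term
    have h1mem : 1 ∈ Finset.Icc 1 (R-1) := by
      rw [Finset.mem_Icc]; omega
    have hsingle := Finset.single_le_sum hterm_nonneg h1mem
    have hterm1 : (1 + Real.log (1:ℕ)) ^ k / (((1:ℕ):ℝ) ^ ζ * ((R:ℝ) - ((1:ℕ):ℝ)) ^ η)
        = 1 / ((R:ℝ) - 1) ^ η := by
      simp [Real.log_one, Real.one_rpow]
    rw [hterm1] at hsingle
    refine le_trans ?_ hsingle
    have hR1pos : (0:ℝ) < (R:ℝ) - 1 := by linarith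
    have h1 : ((R:ℝ) - 1) ^ η ≤ (R:ℝ) ^ η :=
      Real.rpow_le_rpow (le_of_lt hR1pos) (by linarith) (le_of_lt hη)
    have h2 : (0:ℝ) < ((R:ℝ) - 1) ^ η := Real.rpow_pos_of_pos hR1pos η
    have h3 : (0:ℝ) < (R:ℝ) ^ η := Real.rpow_pos_of_pos hRpos η
    rw [Real.rpow_neg (le_of_lt hRpos), one_div]
    have h4 : ((R:ℝ) ^ η)⁻¹ ≤ 1 / (((R:ℝ) - 1) ^ η) := by
      rw [one_div]; exact inv_anti₀ h2 h1
    have h5 : (0:ℝ) ≤ ((R:ℝ) ^ η)⁻¹ := inv_nonneg.mpr h3.le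
    linarith
  · intro _
    -- bound each term below by R^(-ζ-η), multiply by the number of terms
    have hcard : (Finset.Icc 1 (R-1)).card = R - 1 := by
      rw [Nat.card_Icc]; omega
    have hsum : ((R - 1 : ℕ) : ℝ) * (1 / ((R:ℝ) ^ ζ * (R:ℝ) ^ η)) ≤
        ∑ r ∈ Finset.Icc 1 (R-1),
          (1 + Real.log r) ^ k / ((r:ℝ) ^ ζ * ((R:ℝ) - (r:ℝ)) ^ η) := by
      have := Finset.card_nsmul_le_sum (Finset.Icc 1 (R-1))
        (fun r => (1 + Real.log r) ^ k / ((r:ℝ) ^ ζ * ((R:ℝ) - (r:ℝ)) ^ η))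
        (1 / ((R:ℝ) ^ ζ * (R:ℝ) ^ η)) hterm_lb
      rw [hcard, nsmul_eq_mul] at this
      exact this
    refine le_trans ?_ hsum
    have hcast : ((R - 1 : ℕ) : ℝ) = (R:ℝ) - 1 := by
      have : 1 ≤ R := by omega
      push_cast [this]; ring
    rw [hcast]
    have hpow : (R:ℝ) ^ (1 - η - ζ) = (R:ℝ) * ((R:ℝ) ^ ζ * (R:ℝ) ^ η)⁻¹ := by
      have h6 : (R:ℝ) * ((R:ℝ) ^ ζ * (R:ℝ) ^ η)⁻¹ = (R:ℝ) ^ (1:ℝ) * (R:ℝ) ^ (-(ζ + η)) := by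
        rw [Real.rpow_one, ← Real.rpow_add hRpos, ← Real.rpow_neg (le_of_lt hRpos)]
      rw [h6, ← Real.rpow_add hRpos]
      ring_nf
    rw [hpow]
    simp only [one_div]
    have hinv : (0:ℝ) < (((R:ℝ) ^ ζ * (R:ℝ) ^ η))⁻¹ := by positivity
    nlinarith [mul_nonneg (by linarith : (0:ℝ) ≤ (R:ℝ)/2 - 1) hinv.le]
end

section
/- Gapped finite-dimensional setting (see context). The function y ↦ Ω(i·y) is defined for all real y, and lim_{T → ∞} ∫_{−T}^{T} Ω(i·y) · i dy = π·( ⟪G, S (P̄ (V G))⟫ + ⟪G, V (P̄ (S G))⟫ ) = π·( ⟪G, (S∘V + V∘S) G⟫ − 2·⟪G, S G⟫·⟪G, V G⟫ ). -/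
open MeasureTheory Filter intervalIntegral

lemma aux_hasDeriv (μ : ℝ) (hμ : 0 < μ) (y : ℝ) :
    HasDerivAt (fun t : ℝ => ((Real.arctan (t / μ) : ℂ) + (Complex.I / 2) * (Real.log (μ ^ 2 + t ^ 2) : ℂ)))
      (((μ : ℂ) - Complex.I * y)⁻¹) y := by
  have hpos : 0 < μ ^ 2 + y ^ 2 := by positivity
  have h1 : HasDerivAt (fun t : ℝ => Real.arctan (t / μ)) ((1 / (1 + (y / μ) ^ 2)) * (1 / μ)) y := by
    have := (Real.hasDerivAt_arctan (y / μ)).comp y ((hasDerivAt_id y).div_const μ)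
    simpa [Function.comp_def] using this
  have h2 : HasDerivAt (fun t : ℝ => Real.log (μ ^ 2 + t ^ 2)) ((μ ^ 2 + y ^ 2)⁻¹ * (2 * y)) y := by
    have hsq : HasDerivAt (fun t : ℝ => μ ^ 2 + t ^ 2) (2 * y) y := by
      simpa using (hasDerivAt_pow 2 y).const_add (μ ^ 2)
    exact (Real.hasDerivAt_log hpos.ne').comp y hsq
  have h := (h1.ofReal_comp).add ((h2.ofReal_comp).const_mul (Complex.I / 2))
  have hc1 : (μ : ℂ) ≠ 0 := Complex.ofReal_ne_zero.mpr hμ.ne'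
  have hc2 : ((μ : ℂ) ^ 2 + (y : ℂ) ^ 2) ≠ 0 := by
    have : ((μ ^ 2 + y ^ 2 : ℝ) : ℂ) ≠ 0 := Complex.ofReal_ne_zero.mpr hpos.ne'
    push_cast at this; exact this
  have hc3 : (1 : ℂ) + ((y : ℂ) / μ) ^ 2 ≠ 0 := by
    have h0 : (0 : ℝ) < 1 + (y / μ) ^ 2 := by positivity
    have : ((1 + (y / μ) ^ 2 : ℝ) : ℂ) ≠ 0 := Complex.ofReal_ne_zero.mpr h0.ne'
    push_cast at this; exact this
  have heq : (((1 / (1 + (y / μ) ^ 2)) * (1 / μ) : ℝ) : ℂ)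
      + (Complex.I / 2) * (((μ ^ 2 + y ^ 2)⁻¹ * (2 * y) : ℝ) : ℂ)
      = ((μ : ℂ) - Complex.I * y)⁻¹ := by
    apply eq_inv_of_mul_eq_one_left
    push_cast
    field_simp
    ring_nf
    rw [Complex.I_sq]
    ring
  rw [heq] at h
  exact h

lemma aux_cont (μ : ℝ) (hμ : 0 < μ) :
    Continuous (fun y : ℝ => ((μ : ℂ) - Complex.I * y)⁻¹) := by
  apply Continuous.inv₀
  · fun_prop
  · intro y
    intro h0
    have := congrArg Complex.re h0
    simp at this
    exact hμ.ne' this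

lemma aux_cont' (μ : ℝ) (hμ : 0 < μ) :
    Continuous (fun y : ℝ => ((μ : ℂ) + Complex.I * y)⁻¹) := by
  apply Continuous.inv₀
  · fun_prop
  · intro y
    intro h0
    have := congrArg Complex.re h0
    simp at this
    exact hμ.ne' this

lemma aux_integral (μ : ℝ) (hμ : 0 < μ) (T : ℝ) :
    ∫ y in (-T)..T, ((μ : ℂ) - Complex.I * y)⁻¹ = ((2 * Real.arctan (T / μ) : ℝ) : ℂ) := by
  rw [intervalIntegral.integral_eq_sub_of_hasDerivAt
    (fun y _ => aux_hasDeriv μ hμ y) ((aux_cont μ hμ).intervalIntegrable _ _)]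
  have : ((-T) / μ) = -(T / μ) := by ring
  rw [this]
  have h2 : ((-T : ℝ) ^ 2) = T ^ 2 := by ring
  simp [h2, Real.arctan_neg]
  push_cast
  ring

lemma aux_integral' (μ : ℝ) (hμ : 0 < μ) (T : ℝ) :
    ∫ y in (-T)..T, ((μ : ℂ) + Complex.I * y)⁻¹ = ((2 * Real.arctan (T / μ) : ℝ) : ℂ) := by
  have := intervalIntegral.integral_comp_neg (a := -T) (b := T)
    (fun y : ℝ => ((μ : ℂ) - Complex.I * y)⁻¹)
  simp only [neg_neg] at this
  rw [← aux_integral μ hμ T, ← this]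
  congr 1
  ext y
  push_cast
  ring_nf

lemma aux_tendsto (μ : ℝ) (hμ : 0 < μ) :
    Tendsto (fun T : ℝ => ((2 * Real.arctan (T / μ) : ℝ) : ℂ)) atTop (nhds (Real.pi : ℂ)) := by
  have h1 : Tendsto (fun T : ℝ => T / μ) atTop atTop := tendsto_id.atTop_div_const hμ
  have h2 : Tendsto Real.arctan atTop (nhds (Real.pi / 2)) :=
    Real.tendsto_arctan_atTop.mono_right nhdsWithin_le_nhds
  have h3 : Tendsto (fun T : ℝ => 2 * Real.arctan (T / μ)) atTop (nhds Real.pi) := by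
    have := (h2.comp h1).const_mul 2
    rw [show Real.pi = 2 * (Real.pi / 2) by ring]
    exact this
  exact (Complex.continuous_ofReal.continuousAt.tendsto.comp h3)

/-- Gapped finite-dimensional setting. The function `y ↦ Ω(i y)` is defined for all real
`y` (via the unique solutions `u₁ y, u₂ y ∈ W = (ℂ∙G)ᗮ` of the resolvent equations), and
`lim_{T→∞} ∫_{-T}^{T} Ω(i y) i dy
  = π (⟪G, S (P̄ (V G))⟫ + ⟪G, V (P̄ (S G))⟫)
  = π (⟪G, (S∘V + V∘S) G⟫ - 2 ⟪G, S G⟫ ⟪G, V G⟫)`. -/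
theorem integral_Omega_imaginary_axis
    {E : Type*} [NormedAddCommGroup E] [InnerProductSpace ℂ E]
    [FiniteDimensional ℂ E] [Nontrivial E]
    (H S V : E →L[ℂ] E) (hH : IsSelfAdjoint H)
    (G : E) (hG : ‖G‖ = 1) (E₀ : ℝ) (hGeig : H G = (E₀ : ℂ) • G)
    (Δ : ℝ) (hΔ : 0 < Δ)
    (hgap : ∀ w ∈ (ℂ ∙ G)ᗮ, Δ * ‖w‖ ^ 2 ≤ (inner ℂ w (H w - (E₀ : ℂ) • w) : ℂ).re)
    (u₁ u₂ : ℝ → E)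
    (hu₁ : ∀ y : ℝ, u₁ y ∈ (ℂ ∙ G)ᗮ)
    (hu₁eq : ∀ y : ℝ, (Complex.I * (y : ℂ)) • u₁ y - (H (u₁ y) - (E₀ : ℂ) • u₁ y) =
      ((ℂ ∙ G)ᗮ.subtypeL.comp (ℂ ∙ G)ᗮ.orthogonalProjectionOnto) (V G))
    (hu₂ : ∀ y : ℝ, u₂ y ∈ (ℂ ∙ G)ᗮ)
    (hu₂eq : ∀ y : ℝ, (Complex.I * (y : ℂ)) • u₂ y + (H (u₂ y) - (E₀ : ℂ) • u₂ y) =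
      ((ℂ ∙ G)ᗮ.subtypeL.comp (ℂ ∙ G)ᗮ.orthogonalProjectionOnto) (S G)) :
    Tendsto (fun T : ℝ => ∫ y in (-T)..T,
        (Complex.I * (inner ℂ G (S (u₁ y)) : ℂ) - Complex.I * (inner ℂ G (V (u₂ y)) : ℂ))
          * Complex.I)
      atTop
      (nhds ((Real.pi : ℂ) *
        ((inner ℂ G (S (((ℂ ∙ G)ᗮ.subtypeL.comp (ℂ ∙ G)ᗮ.orthogonalProjectionOnto) (V G))) : ℂ) +
         (inner ℂ G (V (((ℂ ∙ G)ᗮ.subtypeL.comp (ℂ ∙ G)ᗮ.orthogonalProjectionOnto) (S G))) : ℂ)))) ∧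
    (Real.pi : ℂ) *
        ((inner ℂ G (S (((ℂ ∙ G)ᗮ.subtypeL.comp (ℂ ∙ G)ᗮ.orthogonalProjectionOnto) (V G))) : ℂ) +
         (inner ℂ G (V (((ℂ ∙ G)ᗮ.subtypeL.comp (ℂ ∙ G)ᗮ.orthogonalProjectionOnto) (S G))) : ℂ))
      = (Real.pi : ℂ) *
        ((inner ℂ G ((S.comp V + V.comp S) G) : ℂ)
          - 2 * (inner ℂ G (S G) : ℂ) * (inner ℂ G (V G) : ℂ)) := by
  classical
  have hsym : (H : E →ₗ[ℂ] E).IsSymmetric := hH.isSymmetric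
  set K : Submodule ℂ E := ℂ ∙ G with hKdef
  have hGK : G ∈ K := Submodule.mem_span_singleton_self G
  -- Pbar as a function
  have hPbar : ∀ x : E, (Kᗮ.subtypeL.comp (Kᗮ.orthogonalProjectionOnto)) x
      = ((Kᗮ.orthogonalProjectionOnto x : E)) := fun x => rfl
  -- inner ℂ of G with elements of Kᗮ vanishes
  have hGinner : ∀ w ∈ Kᗮ, (inner ℂ G w : ℂ) = 0 := by
    intro w hw
    exact (Submodule.mem_orthogonal K w).mp hw G hGK
  -- H maps Kᗮ to Kᗮ
  have hHW : ∀ w ∈ Kᗮ, H w ∈ Kᗮ := by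
    intro w hw
    rw [Submodule.mem_orthogonal]
    intro u hu
    obtain ⟨c, rfl⟩ := Submodule.mem_span_singleton.mp hu
    rw [inner_smul_left]
    have h1 : (inner ℂ G (H w) : ℂ) = inner ℂ (H G) w := (hsym G w).symm
    rw [h1, hGeig, inner_smul_left, hGinner w hw]
    ring
  -- the restricted operator
  set Hq : E →ₗ[ℂ] E := (H : E →ₗ[ℂ] E) - (E₀ : ℂ) • LinearMap.id with hHqdef
  have hHqapp : ∀ x : E, Hq x = H x - (E₀ : ℂ) • x := fun x => rfl
  have hHqW : ∀ x ∈ Kᗮ, Hq x ∈ Kᗮ := by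
    intro x hx
    rw [hHqapp]
    exact Submodule.sub_mem _ (hHW x hx) (Submodule.smul_mem _ _ hx)
  set A : Kᗮ →ₗ[ℂ] Kᗮ := Hq.restrict hHqW with hAdef
  have hAcoe : ∀ x : Kᗮ, (A x : E) = H (x : E) - (E₀ : ℂ) • (x : E) := by
    intro x
    rfl
  have hA : A.IsSymmetric := by
    intro x y
    rw [Submodule.coe_inner, Submodule.coe_inner, hAcoe, hAcoe]
    have h := hsym (x : E) (y : E)
    simp only [ContinuousLinearMap.coe_coe] at h
    rw [inner_sub_left, inner_sub_right, inner_smul_left, inner_smul_right, h,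
      Complex.conj_ofReal]
  -- eigenbasis of A
  set n : ℕ := Module.finrank ℂ ↥Kᗮ with hndef
  set b := hA.eigenvectorBasis rfl with hbdef
  set μ := hA.eigenvalues (rfl : Module.finrank ℂ ↥Kᗮ = n) with hmudef
  have hAb : ∀ i, A (b i) = (μ i : ℂ) • b i := fun i => hA.apply_eigenvectorBasis rfl i
  have hnormb : ∀ i, ‖(b i : E)‖ = 1 := fun i => b.orthonormal.1 i
  have hinnerbb : ∀ i, (inner ℂ (b i) (b i) : ℂ) = 1 := by
    intro i
    rw [inner_self_eq_norm_sq_to_K]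
    rw [show ‖b i‖ = 1 from b.orthonormal.1 i]
    norm_num
  have hμΔ : ∀ i, Δ ≤ μ i := by
    intro i
    have hg := hgap ((b i : E)) (b i).2
    have hval : (inner ℂ ((b i : E)) (H ((b i : E)) - (E₀ : ℂ) • ((b i : E))) : ℂ) = (μ i : ℂ) := by
      rw [← hAcoe, ← Submodule.coe_inner, hAb, inner_smul_right, hinnerbb]
      ring
    rw [hval, hnormb i] at hg
    simpa using hg
  have hμpos : ∀ i, 0 < μ i := fun i => lt_of_lt_of_le hΔ (hμΔ i)
  have hne1 : ∀ (i) (y : ℝ), Complex.I * y - (μ i : ℂ) ≠ 0 := by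
    intro i y h0
    have := congrArg Complex.re h0
    simp at this
    exact (hμpos i).ne' this
  have hne2 : ∀ (i) (y : ℝ), Complex.I * y + (μ i : ℂ) ≠ 0 := by
    intro i y h0
    have := congrArg Complex.re h0
    simp at this
    exact (hμpos i).ne' this
  -- the projected vectors
  set v : ↥Kᗮ := Kᗮ.orthogonalProjectionOnto (V G) with hvdef
  set s : ↥Kᗮ := Kᗮ.orthogonalProjectionOnto (S G) with hsdef
  -- coefficient functions
  set ci : Fin n → ℂ := fun i => (inner ℂ (b i) v : ℂ) with hcidef
  set di : Fin n → ℂ := fun i => (inner ℂ (b i) s : ℂ) with hdidef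
  set si : Fin n → ℂ := fun i => (inner ℂ G (S ((b i : E))) : ℂ) with hsidef
  set vi : Fin n → ℂ := fun i => (inner ℂ G (V ((b i : E))) : ℂ) with hvidef
  -- expansion of a vector of Kᗮ in the eigenbasis, in E
  have hcoe : ∀ x : ↥Kᗮ, (x : E) = ∑ i, (inner ℂ (b i) x : ℂ) • ((b i : ↥Kᗮ) : E) := by
    intro x
    conv_lhs => rw [← b.sum_repr' x]
    push_cast
    rfl
  have hexp : ∀ (B : E →L[ℂ] E) (x : ↥Kᗮ),
      (inner ℂ G (B (x : E)) : ℂ) = ∑ i, (inner ℂ (b i) x : ℂ) * (inner ℂ G (B ((b i : E))) : ℂ) := by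
    intro B x
    conv_lhs => rw [hcoe x]
    rw [map_sum, inner_sum]
    simp [inner_smul_right]
  have hHb : ∀ i, H ((b i : E)) = ((μ i + E₀ : ℝ) : ℂ) • ((b i : E)) := by
    intro i
    have h0 : H ((b i : E)) - (E₀ : ℂ) • ((b i : E)) = (μ i : ℂ) • ((b i : E)) :=
      congrArg (Subtype.val) (hAb i)
    have h1 : H ((b i : E)) = (μ i : ℂ) • ((b i : E)) + (E₀ : ℂ) • ((b i : E)) := by
      rw [← h0]
      abel
    rw [h1, ← add_smul]
    push_cast
    ring_nf
  -- the resolvent coefficients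
  have hc1 : ∀ (y : ℝ) (i), (inner ℂ (b i) (⟨u₁ y, hu₁ y⟩ : ↥Kᗮ) : ℂ)
      = ci i / (Complex.I * y - (μ i : ℂ)) := by
    intro y i
    have h := congrArg (fun z => (inner ℂ ((b i : E)) z : ℂ)) (hu₁eq y)
    simp only [inner_sub_right, inner_smul_right, hPbar] at h
    have h5 : (inner ℂ ((b i : E)) (H (u₁ y)) : ℂ)
        = ((μ i + E₀ : ℝ) : ℂ) * (inner ℂ ((b i : E)) (u₁ y) : ℂ) := by
      have hs := hsym ((b i : E)) (u₁ y)
      simp only [ContinuousLinearMap.coe_coe] at hs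
      rw [← hs, hHb i, inner_smul_left, Complex.conj_ofReal]
    rw [h5] at h
    change _ = (inner ℂ ((b i : E)) ((v : ↥Kᗮ) : E) : ℂ) at h
    have hgoal : (inner ℂ (b i) (⟨u₁ y, hu₁ y⟩ : ↥Kᗮ) : ℂ) = (inner ℂ ((b i : E)) (u₁ y) : ℂ) :=
      rfl
    have hci : ci i = (inner ℂ ((b i : E)) ((v : ↥Kᗮ) : E) : ℂ) := rfl
    rw [hgoal, hci, eq_div_iff (hne1 i y)]
    push_cast at h
    linear_combination h
  have hc2 : ∀ (y : ℝ) (i), (inner ℂ (b i) (⟨u₂ y, hu₂ y⟩ : ↥Kᗮ) : ℂ)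
      = di i / (Complex.I * y + (μ i : ℂ)) := by
    intro y i
    have h := congrArg (fun z => (inner ℂ ((b i : E)) z : ℂ)) (hu₂eq y)
    simp only [inner_add_right, inner_sub_right, inner_smul_right, hPbar] at h
    have h5 : (inner ℂ ((b i : E)) (H (u₂ y)) : ℂ)
        = ((μ i + E₀ : ℝ) : ℂ) * (inner ℂ ((b i : E)) (u₂ y) : ℂ) := by
      have hs := hsym ((b i : E)) (u₂ y)
      simp only [ContinuousLinearMap.coe_coe] at hs
      rw [← hs, hHb i, inner_smul_left, Complex.conj_ofReal]
    rw [h5] at h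
    change _ = (inner ℂ ((b i : E)) ((s : ↥Kᗮ) : E) : ℂ) at h
    have hgoal : (inner ℂ (b i) (⟨u₂ y, hu₂ y⟩ : ↥Kᗮ) : ℂ) = (inner ℂ ((b i : E)) (u₂ y) : ℂ) :=
      rfl
    have hdi : di i = (inner ℂ ((b i : E)) ((s : ↥Kᗮ) : E) : ℂ) := rfl
    rw [hgoal, hdi, eq_div_iff (hne2 i y)]
    push_cast at h
    linear_combination h
  -- pointwise formula for the integrand
  have hpt : ∀ y : ℝ,
      (Complex.I * (inner ℂ G (S (u₁ y)) : ℂ) - Complex.I * (inner ℂ G (V (u₂ y)) : ℂ))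
          * Complex.I
      = ∑ i, (ci i * si i * (((μ i : ℝ) : ℂ) - Complex.I * y)⁻¹
          + di i * vi i * (((μ i : ℝ) : ℂ) + Complex.I * y)⁻¹) := by
    intro y
    have e1 : (inner ℂ G (S (u₁ y)) : ℂ)
        = ∑ i, (ci i / (Complex.I * y - (μ i : ℂ))) * si i := by
      have := hexp S (⟨u₁ y, hu₁ y⟩ : ↥Kᗮ)
      simp only [hc1] at this
      exact this
    have e2 : (inner ℂ G (V (u₂ y)) : ℂ)
        = ∑ i, (di i / (Complex.I * y + (μ i : ℂ))) * vi i := by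
      have := hexp V (⟨u₂ y, hu₂ y⟩ : ↥Kᗮ)
      simp only [hc2] at this
      exact this
    rw [e1, e2, Finset.mul_sum, Finset.mul_sum, ← Finset.sum_sub_distrib, Finset.sum_mul]
    apply Finset.sum_congr rfl
    intro i _
    have h1 := hne1 i y
    have h2 := hne2 i y
    have h3 : ((μ i : ℝ) : ℂ) - Complex.I * y ≠ 0 := by
      intro h0
      apply h1
      linear_combination -h0
    rw [show ((μ i : ℝ) : ℂ) - Complex.I * y = -(Complex.I * y - ((μ i : ℝ) : ℂ)) by ring,
      inv_neg,
      show ((μ i : ℝ) : ℂ) + Complex.I * y = Complex.I * y + ((μ i : ℝ) : ℂ) by ring]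
    linear_combination (ci i * si i * (Complex.I * (y : ℂ) - ((μ i : ℝ) : ℂ))⁻¹
      - di i * vi i * (Complex.I * (y : ℂ) + ((μ i : ℝ) : ℂ))⁻¹) * Complex.I_sq
  -- continuity of the summands
  have hcont1 : ∀ i, Continuous
      (fun y : ℝ => ci i * si i * (((μ i : ℝ) : ℂ) - Complex.I * y)⁻¹) :=
    fun i => continuous_const.mul (aux_cont (μ i) (hμpos i))
  have hcont2 : ∀ i, Continuous
      (fun y : ℝ => di i * vi i * (((μ i : ℝ) : ℂ) + Complex.I * y)⁻¹) :=
    fun i => continuous_const.mul (aux_cont' (μ i) (hμpos i))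
  -- value of the integral for each T
  have hint : ∀ T : ℝ, (∫ y in (-T)..T,
      (Complex.I * (inner ℂ G (S (u₁ y)) : ℂ) - Complex.I * (inner ℂ G (V (u₂ y)) : ℂ))
        * Complex.I)
      = ∑ i, (ci i * si i + di i * vi i) * ((2 * Real.arctan (T / μ i) : ℝ) : ℂ) := by
    intro T
    simp only [hpt]
    rw [intervalIntegral.integral_finset_sum]
    · apply Finset.sum_congr rfl
      intro i _
      rw [intervalIntegral.integral_add ((hcont1 i).intervalIntegrable _ _)
          ((hcont2 i).intervalIntegrable _ _),
        intervalIntegral.integral_const_mul, intervalIntegral.integral_const_mul,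
        aux_integral _ (hμpos i), aux_integral' _ (hμpos i)]
      ring
    · intro i _
      exact ((hcont1 i).add (hcont2 i)).intervalIntegrable _ _
  -- the limit
  have hlim : Tendsto
      (fun T : ℝ => ∑ i, (ci i * si i + di i * vi i) * ((2 * Real.arctan (T / μ i) : ℝ) : ℂ))
      atTop (nhds (∑ i, (ci i * si i + di i * vi i) * (Real.pi : ℂ))) :=
    tendsto_finset_sum _ (fun i _ => (aux_tendsto (μ i) (hμpos i)).const_mul _)
  -- identify the limit value
  have hSv : (inner ℂ G (S ((v : ↥Kᗮ) : E)) : ℂ) = ∑ i, ci i * si i := hexp S v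
  have hVs : (inner ℂ G (V ((s : ↥Kᗮ) : E)) : ℂ) = ∑ i, di i * vi i := hexp V s
  have hval : (Real.pi : ℂ) *
      ((inner ℂ G (S ((Kᗮ.subtypeL.comp (Kᗮ.orthogonalProjectionOnto)) (V G))) : ℂ) +
       (inner ℂ G (V ((Kᗮ.subtypeL.comp (Kᗮ.orthogonalProjectionOnto)) (S G))) : ℂ))
      = ∑ i, (ci i * si i + di i * vi i) * (Real.pi : ℂ) := by
    rw [hPbar, hPbar, ← hvdef, ← hsdef, hSv, hVs, ← Finset.sum_add_distrib,
      Finset.mul_sum]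
    apply Finset.sum_congr rfl
    intro i _
    ring
  constructor
  · have heqfun : (fun T : ℝ => ∫ y in (-T)..T,
        (Complex.I * (inner ℂ G (S (u₁ y)) : ℂ) - Complex.I * (inner ℂ G (V (u₂ y)) : ℂ))
          * Complex.I)
        = fun T : ℝ => ∑ i, (ci i * si i + di i * vi i)
            * ((2 * Real.arctan (T / μ i) : ℝ) : ℂ) := funext hint
    rw [heqfun, hval]
    exact hlim
  · have hproj : ∀ x : E, ((Kᗮ.orthogonalProjectionOnto x : E)) = x - (inner ℂ G x : ℂ) • G := by
      intro x
      rw [← Submodule.starProjection_apply, Submodule.starProjection_orthogonal_val]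
      congr 1
      show ((ℂ ∙ G).starProjection x) = (inner ℂ G x : ℂ) • G
      rw [Submodule.starProjection_singleton, hG]
      norm_num
    rw [hPbar, hPbar, hproj, hproj]
    simp only [map_sub, _root_.map_smul, inner_sub_right, inner_add_right, inner_smul_right,
      ContinuousLinearMap.add_apply, ContinuousLinearMap.comp_apply]
    ring
end

section
/- Gapped finite-dimensional setting (see context). Suppose y₀ > 0 and B₀ ≥ 0 satisfy |Ω(i·y)| ≤ B₀ for all real y with |y| ≤ y₀, and suppose B : ℝ → ℝ is nonnegative, integrable on (y₀, ∞), and satisfies |Ω(i·y)| ≤ B(|y|) for all real y with |y| > y₀. Then π · | ⟪G, (S∘V + V∘S) G⟫ − 2·⟪G, S G⟫·⟪G, V G⟫ | ≤ 2·y₀·B₀ + 2·∫_{y₀}^{∞} B(y) dy. -/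
open MeasureTheory Filter

lemma aux_ne₁ (L : ℝ) (hL : 0 < L) (y : ℝ) : Complex.I * y - L ≠ 0 := by
  intro h
  have := congrArg Complex.re h
  simp [Complex.mul_re] at this
  linarith

lemma aux_ne₂ (L : ℝ) (hL : 0 < L) (y : ℝ) : Complex.I * y + L ≠ 0 := by
  intro h
  have := congrArg Complex.re h
  simp [Complex.mul_re] at this
  linarith

noncomputable def auxF (a b : ℂ) (L : ℝ) : ℝ → ℂ := fun y =>
  (a - b) * (((1 : ℝ) / 2 * Real.log (y ^ 2 + L ^ 2) : ℝ) : ℂ)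
    - Complex.I * (a + b) * ((Real.arctan (y / L) : ℝ) : ℂ)

noncomputable def auxf (a b : ℂ) (L : ℝ) : ℝ → ℂ := fun y =>
  Complex.I * a / (Complex.I * y - L) - Complex.I * b / (Complex.I * y + L)

lemma aux_pf (a b : ℂ) (L : ℝ) (hL : 0 < L) (y : ℝ) :
    auxf a b L y = (a - b) * ((y : ℂ) / ((y : ℂ) ^ 2 + (L : ℂ) ^ 2))
      - Complex.I * (a + b) * ((L : ℂ) / ((y : ℂ) ^ 2 + (L : ℂ) ^ 2)) := by
  have h1 := aux_ne₁ L hL y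
  have h2 := aux_ne₂ L hL y
  have h3 : ((y : ℂ) ^ 2 + (L : ℂ) ^ 2) ≠ 0 := by
    rw [show ((y:ℂ)^2+(L:ℂ)^2) = ((y^2+L^2 : ℝ) : ℂ) by push_cast; ring]
    rw [Complex.ofReal_ne_zero]; positivity
  unfold auxf
  field_simp
  linear_combination ((a*(y:ℂ)*(L:ℂ)^2 - (y:ℂ)*(L:ℂ)^2*b)
    + Complex.I*(a*(y:ℂ)^2*(L:ℂ) + (y:ℂ)^2*(L:ℂ)*b)) * Complex.I_sq

lemma aux_deriv (a b : ℂ) (L : ℝ) (hL : 0 < L) (y : ℝ) :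
    HasDerivAt (auxF a b L) (auxf a b L y) y := by
  have hden : y ^ 2 + L ^ 2 ≠ 0 := by positivity
  have hlog : HasDerivAt (fun y : ℝ => (1 : ℝ) / 2 * Real.log (y ^ 2 + L ^ 2))
      (y / (y ^ 2 + L ^ 2)) y := by
    have h0 : HasDerivAt (fun y : ℝ => y ^ 2 + L ^ 2) (2 * y ^ 1) y :=
      (hasDerivAt_pow 2 y).add_const _
    have := (h0.log hden).const_mul ((1 : ℝ) / 2)
    refine this.congr_deriv ?_
    ring
  have harc : HasDerivAt (fun y : ℝ => Real.arctan (y / L))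
      (L / (y ^ 2 + L ^ 2)) y := by
    have := ((hasDerivAt_id y).div_const L).arctan
    simp only [id] at this
    refine this.congr_deriv ?_
    rw [div_pow]
    field_simp
    ring
  have main := (hlog.ofReal_comp.const_mul (a - b)).sub
    (harc.ofReal_comp.const_mul (Complex.I * (a + b)))
  rw [show auxf a b L y = (a - b) * ((y / (y ^ 2 + L ^ 2) : ℝ) : ℂ)
      - Complex.I * (a + b) * ((L / (y ^ 2 + L ^ 2) : ℝ) : ℂ) by
    rw [aux_pf a b L hL y]; push_cast; ring]
  exact main

lemma aux_cont_s8 (a b : ℂ) (L : ℝ) (hL : 0 < L) : Continuous (auxf a b L) := by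
  unfold auxf
  apply Continuous.sub
  · exact continuous_const.div (by continuity) (fun y => aux_ne₁ L hL y)
  · exact continuous_const.div (by continuity) (fun y => aux_ne₂ L hL y)

lemma aux_interval (a b : ℂ) (L : ℝ) (hL : 0 < L) (R : ℝ) :
    ∫ y in (-R)..R, auxf a b L y =
      -2 * Complex.I * (a + b) * ((Real.arctan (R / L) : ℝ) : ℂ) := by
  rw [intervalIntegral.integral_eq_sub_of_hasDerivAt
    (fun y _ => aux_deriv a b L hL y)
    ((aux_cont_s8 a b L hL).intervalIntegrable _ _)]
  unfold auxF
  rw [show ((-R : ℝ) ^ 2 : ℝ) = R ^ 2 by ring, show (-R) / L = -(R / L) by ring,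
    Real.arctan_neg]
  push_cast
  ring

lemma aux_tendsto_s8 (a b : ℂ) (L : ℝ) (hL : 0 < L) :
    Tendsto (fun R : ℝ => -2 * Complex.I * (a + b) * ((Real.arctan (R / L) : ℝ) : ℂ)) atTop
      (nhds (-Complex.I * (Real.pi : ℂ) * (a + b))) := by
  have h1 : Tendsto (fun R : ℝ => R / L) atTop atTop :=
    tendsto_id.atTop_div_const hL
  have h2 : Tendsto (fun R : ℝ => Real.arctan (R / L)) atTop (nhds (Real.pi / 2)) :=
    (Real.tendsto_arctan_atTop.mono_right nhdsWithin_le_nhds).comp h1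
  have h3 : Tendsto (fun R : ℝ => ((Real.arctan (R / L) : ℝ) : ℂ)) atTop
      (nhds ((Real.pi / 2 : ℝ) : ℂ)) :=
    (Complex.continuous_ofReal.tendsto _).comp h2
  have := h3.const_mul (-2 * Complex.I * (a + b))
  convert this using 2
  push_cast
  ring

open Filter MeasureTheory

/-- Gapped finite-dimensional setting. If `|Ω(iy)| ≤ B₀` for `|y| ≤ y₀` and
`|Ω(iy)| ≤ B(|y|)` for `|y| > y₀` with `B ≥ 0` integrable on `(y₀, ∞)`, then the
(twice symmetrized) connected correlation obeys
`π |⟪G,(S∘V+V∘S)G⟫ - 2⟪G,SG⟫⟪G,VG⟫| ≤ 2 y₀ B₀ + 2 ∫_{y₀}^∞ B(y) dy`. -/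
theorem connected_correlation_bound
    {E : Type*} [NormedAddCommGroup E] [InnerProductSpace ℂ E]
    [FiniteDimensional ℂ E] [Nontrivial E]
    (H S V : E →L[ℂ] E) (hH : IsSelfAdjoint H)
    (G : E) (hG : ‖G‖ = 1) (E₀ : ℝ) (hGeig : H G = (E₀ : ℂ) • G)
    (Δ : ℝ) (hΔ : 0 < Δ)
    (hgap : ∀ w ∈ (ℂ ∙ G)ᗮ, Δ * ‖w‖ ^ 2 ≤ (inner ℂ w (H w - (E₀ : ℂ) • w) : ℂ).re)
    (u₁ u₂ : ℝ → E)
    (hu₁ : ∀ y : ℝ, u₁ y ∈ (ℂ ∙ G)ᗮ)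
    (hu₁eq : ∀ y : ℝ, (Complex.I * (y : ℂ)) • u₁ y - (H (u₁ y) - (E₀ : ℂ) • u₁ y) =
      ((ℂ ∙ G)ᗮ.subtypeL.comp (Submodule.orthogonalProjection (ℂ ∙ G)ᗮ)) (V G))
    (hu₂ : ∀ y : ℝ, u₂ y ∈ (ℂ ∙ G)ᗮ)
    (hu₂eq : ∀ y : ℝ, (Complex.I * (y : ℂ)) • u₂ y + (H (u₂ y) - (E₀ : ℂ) • u₂ y) =
      ((ℂ ∙ G)ᗮ.subtypeL.comp (Submodule.orthogonalProjection (ℂ ∙ G)ᗮ)) (S G))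
    (y₀ B₀ : ℝ) (hy₀ : 0 < y₀) (hB₀ : 0 ≤ B₀)
    (hsmall : ∀ y : ℝ, |y| ≤ y₀ →
      ‖Complex.I * (inner ℂ G (S (u₁ y)) : ℂ)
        - Complex.I * (inner ℂ G (V (u₂ y)) : ℂ)‖ ≤ B₀)
    (B : ℝ → ℝ) (hBnonneg : ∀ y : ℝ, 0 ≤ B y)
    (hBint : IntegrableOn B (Set.Ioi y₀))
    (hlarge : ∀ y : ℝ, y₀ < |y| →
      ‖Complex.I * (inner ℂ G (S (u₁ y)) : ℂ)
        - Complex.I * (inner ℂ G (V (u₂ y)) : ℂ)‖ ≤ B |y|) :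
    Real.pi *
      ‖(inner ℂ G ((S.comp V + V.comp S) G) : ℂ)
        - 2 * (inner ℂ G (S G) : ℂ) * (inner ℂ G (V G) : ℂ)‖
      ≤ 2 * y₀ * B₀ + 2 * ∫ y in Set.Ioi y₀, B y := by
  classical
  have hGG : (inner ℂ G G : ℂ) = 1 := by
    rw [inner_self_eq_norm_sq_to_K, hG]; norm_num
  have hsym := hH.isSymmetric
  have hinv : ∀ x ∈ (ℂ ∙ G)ᗮ, (H : E →ₗ[ℂ] E) x ∈ (ℂ ∙ G)ᗮ := by
    intro w hw
    rw [Submodule.mem_orthogonal_singleton_iff_inner_right] at hw ⊢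
    have h1 : (inner ℂ (H G) w : ℂ) = inner ℂ G ((H : E →ₗ[ℂ] E) w) := hsym G w
    rw [← h1, hGeig, inner_smul_left, hw, mul_zero]
  set T : (ℂ ∙ G)ᗮ →ₗ[ℂ] (ℂ ∙ G)ᗮ := (H : E →ₗ[ℂ] E).restrict hinv with hTdef
  have hTcoe : ∀ x : (ℂ ∙ G)ᗮ, (T x : E) = H (x : E) := fun x => rfl
  have hTsym : T.IsSymmetric := by
    intro x y
    have := hsym (x : E) (y : E)
    simpa [Submodule.coe_inner, hTcoe] using this
  set n := Module.finrank ℂ ((ℂ ∙ G)ᗮ : Submodule ℂ E) with hn'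
  have hn : Module.finrank ℂ ((ℂ ∙ G)ᗮ : Submodule ℂ E) = n := rfl
  set e := hTsym.eigenvectorBasis hn with he
  set μ := hTsym.eigenvalues hn with hμ
  have heig : ∀ i, T (e i) = (μ i : ℂ) • e i := fun i =>
    hTsym.apply_eigenvectorBasis hn i
  have hHei : ∀ i, H ((e i : E)) = (μ i : ℂ) • (e i : E) := by
    intro i
    have := congrArg (Subtype.val) (heig i)
    simpa [hTcoe] using this
  have hnorm : ∀ i, ‖(e i : E)‖ = 1 := by
    intro i
    have := e.orthonormal.1 i
    exact this
  set lam : Fin n → ℝ := fun i => μ i - E₀ with hlamdef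
  have hlam : ∀ i, 0 < lam i := by
    intro i
    have h := hgap (e i : E) (e i).2
    have h2 : H ((e i : E)) - (E₀ : ℂ) • (e i : E) = ((lam i : ℝ) : ℂ) • (e i : E) := by
      rw [hHei i, hlamdef]; push_cast; rw [← sub_smul]
    have h3 : (inner ℂ ((e i : E)) ((e i : E)) : ℂ) = 1 := by
      rw [inner_self_eq_norm_sq_to_K, hnorm i]; norm_num
    rw [h2, inner_smul_right, h3, mul_one, hnorm i] at h
    simp only [one_pow, mul_one, Complex.ofReal_re] at h
    linarith
  -- coefficient formulas
  have key₁ : ∀ (y : ℝ) i, (inner ℂ ((e i : E)) (u₁ y) : ℂ)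
      = (inner ℂ ((e i : E)) (V G) : ℂ) / (Complex.I * y - lam i) := by
    intro y i
    have h := congrArg (fun z => (inner ℂ ((e i : E)) z : ℂ)) (hu₁eq y)
    simp only [inner_sub_right, inner_smul_right] at h
    have hH1 : (inner ℂ ((e i : E)) (H (u₁ y)) : ℂ)
        = (μ i : ℂ) * inner ℂ ((e i : E)) (u₁ y) := by
      have hs := hsym (e i : E) (u₁ y)
      simp only [ContinuousLinearMap.coe_coe] at hs
      rw [← hs, hHei i, inner_smul_left, Complex.conj_ofReal]
    have hRHS : (inner ℂ ((e i : E))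
        (((ℂ ∙ G)ᗮ.subtypeL.comp (Submodule.orthogonalProjection (ℂ ∙ G)ᗮ)) (V G)) : ℂ)
        = inner ℂ ((e i : E)) (V G) := by
      have h0 := Submodule.inner_orthogonalProjection_eq_of_mem_left (K := (ℂ ∙ G)ᗮ) (e i) (V G)
      rw [Submodule.coe_inner] at h0
      simpa only [ContinuousLinearMap.comp_apply, Submodule.subtypeL_apply] using h0
    rw [hH1, hRHS] at h
    rw [eq_div_iff (aux_ne₁ (lam i) (hlam i) y)]
    have hl : ((lam i : ℝ) : ℂ) = (μ i : ℂ) - (E₀ : ℂ) := by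
      rw [hlamdef]; push_cast; ring
    rw [hl]
    linear_combination h
  have key₂ : ∀ (y : ℝ) i, (inner ℂ ((e i : E)) (u₂ y) : ℂ)
      = (inner ℂ ((e i : E)) (S G) : ℂ) / (Complex.I * y + lam i) := by
    intro y i
    have h := congrArg (fun z => (inner ℂ ((e i : E)) z : ℂ)) (hu₂eq y)
    simp only [inner_add_right, inner_sub_right, inner_smul_right] at h
    have hH1 : (inner ℂ ((e i : E)) (H (u₂ y)) : ℂ)
        = (μ i : ℂ) * inner ℂ ((e i : E)) (u₂ y) := by
      have hs := hsym (e i : E) (u₂ y)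
      simp only [ContinuousLinearMap.coe_coe] at hs
      rw [← hs, hHei i, inner_smul_left, Complex.conj_ofReal]
    have hRHS : (inner ℂ ((e i : E))
        (((ℂ ∙ G)ᗮ.subtypeL.comp (Submodule.orthogonalProjection (ℂ ∙ G)ᗮ)) (S G)) : ℂ)
        = inner ℂ ((e i : E)) (S G) := by
      have h0 := Submodule.inner_orthogonalProjection_eq_of_mem_left (K := (ℂ ∙ G)ᗮ) (e i) (S G)
      rw [Submodule.coe_inner] at h0
      simpa only [ContinuousLinearMap.comp_apply, Submodule.subtypeL_apply] using h0
    rw [hH1, hRHS] at h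
    rw [eq_div_iff (aux_ne₂ (lam i) (hlam i) y)]
    have hl : ((lam i : ℝ) : ℂ) = (μ i : ℂ) - (E₀ : ℂ) := by
      rw [hlamdef]; push_cast; ring
    rw [hl]
    linear_combination h
  -- expansion of vectors in the orthogonal complement
  have hexp : ∀ w : E, w ∈ (ℂ ∙ G)ᗮ →
      w = ∑ i, (inner ℂ ((e i : E)) w : ℂ) • (e i : E) := by
    intro w hw
    have h := e.sum_repr' ⟨w, hw⟩
    have h2 := congrArg (Subtype.val) h
    simpa [Submodule.coe_inner] using h2.symm
  have hG0 : ∀ i, (inner ℂ ((e i : E)) G : ℂ) = 0 := by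
    intro i
    have hm := (e i).2
    rw [Submodule.mem_orthogonal_singleton_iff_inner_right] at hm
    rw [← inner_conj_symm, hm, map_zero]
  have hdecomp : ∀ x : E, x = (inner ℂ G x : ℂ) • G
      + ∑ i, (inner ℂ ((e i : E)) x : ℂ) • (e i : E) := by
    intro x
    have hw : x - (inner ℂ G x : ℂ) • G ∈ (ℂ ∙ G)ᗮ := by
      rw [Submodule.mem_orthogonal_singleton_iff_inner_right, inner_sub_right,
        inner_smul_right, hGG, mul_one, sub_self]
    have h2 := hexp _ hw
    have hcoeff : ∀ i, (inner ℂ ((e i : E)) (x - (inner ℂ G x : ℂ) • G) : ℂ)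
        = inner ℂ ((e i : E)) x := by
      intro i
      rw [inner_sub_right, inner_smul_right, hG0 i, mul_zero, sub_zero]
    conv_lhs => rw [show x = (inner ℂ G x : ℂ) • G + (x - (inner ℂ G x : ℂ) • G) by abel]
    rw [h2]
    simp_rw [hcoeff]
  -- coefficients
  set a : Fin n → ℂ := fun i =>
    (inner ℂ G (S (e i : E)) : ℂ) * (inner ℂ ((e i : E)) (V G) : ℂ) with hadef
  set b : Fin n → ℂ := fun i =>
    (inner ℂ G (V (e i : E)) : ℂ) * (inner ℂ ((e i : E)) (S G) : ℂ) with hbdef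
  -- Ω as an explicit sum
  set Om : ℝ → ℂ := fun y => Complex.I * (inner ℂ G (S (u₁ y)) : ℂ)
    - Complex.I * (inner ℂ G (V (u₂ y)) : ℂ) with hOmdef
  have hOmsum : ∀ y, Om y = ∑ i, auxf (a i) (b i) (lam i) y := by
    intro y
    have h1 : (inner ℂ G (S (u₁ y)) : ℂ)
        = ∑ i, (inner ℂ ((e i : E)) (V G) : ℂ) / (Complex.I * y - lam i)
            * (inner ℂ G (S (e i : E)) : ℂ) := by
      conv_lhs => rw [hexp (u₁ y) (hu₁ y)]
      rw [map_sum, inner_sum]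
      refine Finset.sum_congr rfl fun i _ => ?_
      rw [_root_.map_smul, inner_smul_right, key₁ y i]
    have h2 : (inner ℂ G (V (u₂ y)) : ℂ)
        = ∑ i, (inner ℂ ((e i : E)) (S G) : ℂ) / (Complex.I * y + lam i)
            * (inner ℂ G (V (e i : E)) : ℂ) := by
      conv_lhs => rw [hexp (u₂ y) (hu₂ y)]
      rw [map_sum, inner_sum]
      refine Finset.sum_congr rfl fun i _ => ?_
      rw [_root_.map_smul, inner_smul_right, key₂ y i]
    rw [hOmdef]
    simp only [h1, h2, Finset.mul_sum, ← Finset.sum_sub_distrib]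
    refine Finset.sum_congr rfl fun i _ => ?_
    rw [hadef, hbdef]
    unfold auxf
    ring
  -- the correlation as a sum
  set C : ℂ := (inner ℂ G ((S.comp V + V.comp S) G) : ℂ)
    - 2 * (inner ℂ G (S G) : ℂ) * (inner ℂ G (V G) : ℂ) with hCdef
  have hSV : (inner ℂ G (S (V G)) : ℂ)
      = (inner ℂ G (V G) : ℂ) * (inner ℂ G (S G) : ℂ) + ∑ i, a i := by
    conv_lhs => rw [hdecomp (V G)]
    rw [map_add, inner_add_right, _root_.map_smul, inner_smul_right, map_sum, inner_sum]
    congr 1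
    refine Finset.sum_congr rfl fun i _ => ?_
    rw [_root_.map_smul, inner_smul_right, hadef]
    ring
  have hVS : (inner ℂ G (V (S G)) : ℂ)
      = (inner ℂ G (S G) : ℂ) * (inner ℂ G (V G) : ℂ) + ∑ i, b i := by
    conv_lhs => rw [hdecomp (S G)]
    rw [map_add, inner_add_right, _root_.map_smul, inner_smul_right, map_sum, inner_sum]
    congr 1
    refine Finset.sum_congr rfl fun i _ => ?_
    rw [_root_.map_smul, inner_smul_right, hbdef]
    ring
  have hC : C = ∑ i, (a i + b i) := by
    rw [hCdef]
    simp only [ContinuousLinearMap.add_apply, ContinuousLinearMap.comp_apply,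
      inner_add_right, hSV, hVS, Finset.sum_add_distrib]
    ring
  -- continuity of Om
  have hOmcont : Continuous Om := by
    rw [show Om = fun y => ∑ i, auxf (a i) (b i) (lam i) y from funext hOmsum]
    exact continuous_finset_sum _ fun i _ => aux_cont_s8 (a i) (b i) (lam i) (hlam i)
  have hmeas : AEStronglyMeasurable Om (volume : Measure ℝ) := hOmcont.aestronglyMeasurable
  have hint1 : IntegrableOn Om (Set.Icc (-y₀) y₀) := hOmcont.integrableOn_Icc
  have hbig : ∀ y : ℝ, y₀ < y → ‖Om y‖ ≤ B y := by
    intro y hy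
    have habs : |y| = y := abs_of_pos (lt_trans hy₀ hy)
    have h := hlarge y (by rw [habs]; exact hy)
    rw [habs] at h
    rw [hOmdef]
    exact h
  have hbigneg : ∀ y : ℝ, y < -y₀ → ‖Om y‖ ≤ B (-y) := by
    intro y hy
    have habs : |y| = -y := abs_of_neg (by linarith)
    have h := hlarge y (by rw [habs]; linarith)
    rw [habs] at h
    rw [hOmdef]
    exact h
  have hint2 : IntegrableOn Om (Set.Ioi y₀) := by
    apply Integrable.mono' hBint hmeas.restrict
    filter_upwards [ae_restrict_mem measurableSet_Ioi] with y hy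
    exact hbig y hy
  have hBneg : IntegrableOn (fun y : ℝ => B (-y)) (Set.Iio (-y₀)) := by
    have h2 := (MeasurePreserving.integrableOn_comp_preimage
      (Measure.measurePreserving_neg (volume : Measure ℝ))
      (Homeomorph.neg ℝ).measurableEmbedding).2 hBint
    apply h2.mono_set
    intro y hy
    simp only [Set.mem_preimage, Set.mem_Ioi]
    simp only [Set.mem_Iio] at hy
    show y₀ < -y
    linarith
  have hint3 : IntegrableOn Om (Set.Iio (-y₀)) := by
    apply Integrable.mono' hBneg hmeas.restrict
    filter_upwards [ae_restrict_mem measurableSet_Iio] with y hy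
    exact hbigneg y hy
  have huniv : Set.Iio (-y₀) ∪ (Set.Icc (-y₀) y₀ ∪ Set.Ioi y₀) = Set.univ := by
    ext y
    simp only [Set.mem_union, Set.mem_Iio, Set.mem_Icc, Set.mem_Ioi, Set.mem_univ,
      iff_true]
    rcases lt_or_ge y (-y₀) with h | h
    · exact Or.inl h
    · rcases le_or_gt y y₀ with h2 | h2
      · exact Or.inr (Or.inl ⟨h, h2⟩)
      · exact Or.inr (Or.inr h2)
  have hOmint : Integrable Om := by
    rw [← integrableOn_univ, ← huniv]
    exact hint3.union (hint1.union hint2)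
  -- identification of the full-line integral
  have hlim1 : Tendsto (fun R : ℝ => ∫ y in (-R)..R, Om y) atTop (nhds (∫ y, Om y)) :=
    intervalIntegral_tendsto_integral hOmint tendsto_neg_atTop_atBot tendsto_id
  have hIval : ∀ R : ℝ, (∫ y in (-R)..R, Om y)
      = ∑ i, (-2 * Complex.I * (a i + b i) * ((Real.arctan (R / lam i) : ℝ) : ℂ)) := by
    intro R
    rw [show (∫ y in (-R)..R, Om y) = ∫ y in (-R)..R, ∑ i, auxf (a i) (b i) (lam i) y by
      congr 1; exact funext hOmsum]
    rw [intervalIntegral.integral_finset_sum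
      (fun i _ => ((aux_cont_s8 (a i) (b i) (lam i) (hlam i)).intervalIntegrable _ _))]
    exact Finset.sum_congr rfl fun i _ => aux_interval (a i) (b i) (lam i) (hlam i) R
  have hlim2 : Tendsto (fun R : ℝ => ∫ y in (-R)..R, Om y) atTop
      (nhds (∑ i, -Complex.I * (Real.pi : ℂ) * (a i + b i))) := by
    rw [show (fun R : ℝ => ∫ y in (-R)..R, Om y)
        = fun R => ∑ i, (-2 * Complex.I * (a i + b i) * ((Real.arctan (R / lam i) : ℝ) : ℂ))
      from funext hIval]
    exact tendsto_finset_sum _ fun i _ => aux_tendsto_s8 (a i) (b i) (lam i) (hlam i)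
  have hIeq : (∫ y, Om y) = -Complex.I * (Real.pi : ℂ) * C := by
    have h := tendsto_nhds_unique hlim1 hlim2
    rw [h, hC, Finset.mul_sum]
  -- splitting the norm integral
  have hd1 : Disjoint (Set.Icc (-y₀) y₀) (Set.Ioi y₀) := by
    rw [Set.disjoint_left]
    intro y h1 h2
    exact absurd h2 (not_lt.2 h1.2)
  have hd2 : Disjoint (Set.Iio (-y₀)) (Set.Icc (-y₀) y₀ ∪ Set.Ioi y₀) := by
    rw [Set.disjoint_left]
    intro y h1 h2
    rcases h2 with h2 | h2
    · exact absurd h1 (not_lt.2 h2.1)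
    · have h3 : y₀ < y := h2
      have h4 : y < -y₀ := h1
      linarith
  have hsplit : (∫ y, ‖Om y‖) = (∫ y in Set.Iio (-y₀), ‖Om y‖)
      + ((∫ y in Set.Icc (-y₀) y₀, ‖Om y‖) + ∫ y in Set.Ioi y₀, ‖Om y‖) := by
    rw [← setIntegral_univ, ← huniv,
      setIntegral_union hd2 (measurableSet_Icc.union measurableSet_Ioi) hint3.norm
        (hint1.union hint2).norm,
      setIntegral_union hd1 measurableSet_Ioi hint1.norm hint2.norm]
  have hb1 : (∫ y in Set.Iio (-y₀), ‖Om y‖) ≤ ∫ y in Set.Ioi y₀, B y := by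
    have step1 : (∫ y in Set.Iio (-y₀), ‖Om y‖) ≤ ∫ y in Set.Iio (-y₀), B (-y) := by
      apply setIntegral_mono_on hint3.norm hBneg measurableSet_Iio
      intro y hy
      exact hbigneg y hy
    have step2 : (∫ y in Set.Iio (-y₀), B (-y)) = ∫ y in Set.Ioi y₀, B y := by
      rw [← integral_Iic_eq_integral_Iio, integral_comp_neg_Iic]
      norm_num
    linarith
  have hb2 : (∫ y in Set.Icc (-y₀) y₀, ‖Om y‖) ≤ 2 * y₀ * B₀ := by
    have step1 : (∫ y in Set.Icc (-y₀) y₀, ‖Om y‖) ≤ ∫ _y in Set.Icc (-y₀) y₀, B₀ := by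
      apply setIntegral_mono_on hint1.norm
        (integrableOn_const measure_Icc_lt_top.ne) measurableSet_Icc
      intro y hy
      rw [hOmdef]
      exact hsmall y (abs_le.2 ⟨hy.1, hy.2⟩)
    have step2 : (∫ _y in Set.Icc (-y₀) y₀, B₀) = 2 * y₀ * B₀ := by
      rw [setIntegral_const, Real.volume_real_Icc_of_le (by linarith), smul_eq_mul]
      ring
    linarith
  have hb3 : (∫ y in Set.Ioi y₀, ‖Om y‖) ≤ ∫ y in Set.Ioi y₀, B y := by
    apply setIntegral_mono_on hint2.norm hBint measurableSet_Ioi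
    intro y hy
    exact hbig y hy
  have hfinal : ‖∫ y, Om y‖ ≤ 2 * y₀ * B₀ + 2 * ∫ y in Set.Ioi y₀, B y := by
    calc ‖∫ y, Om y‖ ≤ ∫ y, ‖Om y‖ := norm_integral_le_integral_norm _
      _ ≤ 2 * y₀ * B₀ + 2 * ∫ y in Set.Ioi y₀, B y := by
          rw [hsplit]; linarith
  have hlhs : ‖∫ y, Om y‖ = Real.pi * ‖C‖ := by
    rw [hIeq, norm_mul, norm_mul, norm_neg, Complex.norm_I,
      Complex.norm_real, Real.norm_eq_abs, abs_of_pos Real.pi_pos]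
    ring
  rw [← hlhs] at *
  exact hfinal
end

section
/- Derivative of a ground-state expectation value along a gapped path. Let E be a nonzero finite-dimensional complex inner product space, let H₀, V, S : E → E be self-adjoint linear maps, set H(λ) := H₀ + λ·V, and let G : ℝ → E be a differentiable map such that for every λ: ‖G(λ)‖ = 1, H(λ) G(λ) = E(λ) • G(λ) with E(λ) := ⟪G(λ), H(λ) G(λ)⟫, and ⟪G(λ), G′(λ)⟫ = 0. Assume moreover a uniform spectral gap: there is Δ > 0 such that for every λ and every w ⊥ G(λ), ⟪w, (H(λ) − E(λ)) w⟫ ≥ Δ·‖w‖². Then for every λ the map u ↦ (H(λ) − E(λ)) u is a bijection of (ℂ∙G(λ))ᗮ, and, letting u(λ) ∈ (ℂ∙G(λ))ᗮ be the unique solution of (H(λ) − E(λ)) u(λ) = V G(λ) − ⟪G(λ), V G(λ)⟫ • G(λ), the function λ ↦ ⟪G(λ), S G(λ)⟫ is differentiable with d/dλ ⟪G(λ), S G(λ)⟫ = −2·Re ⟪G(λ), S u(λ)⟫. -/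
open scoped InnerProductSpace ComplexConjugate


/-- Derivative of a ground-state expectation value along a gapped path:
with `H(λ) = H₀ + λV`, a differentiable family of gauged unit eigenvectors `G(λ)`, and
a uniform spectral gap `Δ > 0` above the eigenvalue `E(λ) = ⟪G(λ), H(λ) G(λ)⟫`, the map
`u ↦ (H(λ) - E(λ)) u` is a bijection of `(ℂ∙G(λ))ᗮ` (stated as unique solvability), and
for the unique solution `u(λ) ∈ (ℂ∙G(λ))ᗮ` of
`(H(λ) - E(λ)) u(λ) = V G(λ) - ⟪G(λ), V G(λ)⟫ • G(λ)` one has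
`d/dλ ⟪G(λ), S G(λ)⟫ = -2 Re ⟪G(λ), S u(λ)⟫`. -/
theorem deriv_ground_state_expectation
    {E : Type*} [NormedAddCommGroup E] [InnerProductSpace ℂ E]
    [FiniteDimensional ℂ E] [Nontrivial E]
    (H₀ V S : E →L[ℂ] E) (hH₀ : IsSelfAdjoint H₀) (hV : IsSelfAdjoint V)
    (hS : IsSelfAdjoint S)
    (G G' : ℝ → E) (hG : ∀ lam : ℝ, HasDerivAt G (G' lam) lam)
    (hnorm : ∀ lam : ℝ, ‖G lam‖ = 1)
    (heig : ∀ lam : ℝ, (H₀ + (lam : ℂ) • V) (G lam) =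
      (inner ℂ (G lam) ((H₀ + (lam : ℂ) • V) (G lam)) : ℂ) • G lam)
    (hgauge : ∀ lam : ℝ, (inner ℂ (G lam) (G' lam) : ℂ) = 0)
    (Δ : ℝ) (hΔ : 0 < Δ)
    (hgap : ∀ lam : ℝ, ∀ w : E, (inner ℂ (G lam) w : ℂ) = 0 →
      Δ * ‖w‖ ^ 2 ≤
        (inner ℂ w ((H₀ + (lam : ℂ) • V) w
          - (inner ℂ (G lam) ((H₀ + (lam : ℂ) • V) (G lam)) : ℂ) • w) : ℂ).re) :
    (∀ lam : ℝ, ∀ v ∈ (ℂ ∙ (G lam))ᗮ,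
      ∃! u, u ∈ (ℂ ∙ (G lam))ᗮ ∧
        (H₀ + (lam : ℂ) • V) u
            - (inner ℂ (G lam) ((H₀ + (lam : ℂ) • V) (G lam)) : ℂ) • u = v) ∧
    ∀ u : ℝ → E, (∀ lam : ℝ, u lam ∈ (ℂ ∙ (G lam))ᗮ) →
      (∀ lam : ℝ,
        (H₀ + (lam : ℂ) • V) (u lam)
            - (inner ℂ (G lam) ((H₀ + (lam : ℂ) • V) (G lam)) : ℂ) • u lam
          = V (G lam) - (inner ℂ (G lam) (V (G lam)) : ℂ) • G lam) →
      ∀ lam : ℝ,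
        HasDerivAt (fun t : ℝ => (inner ℂ (G t) (S (G t)) : ℂ))
          (((-2 * (inner ℂ (G lam) (S (u lam)) : ℂ).re : ℝ) : ℂ)) lam := by
  -- notation
  set H : ℝ → E →L[ℂ] E := fun t => H₀ + (t : ℂ) • V with hHdef
  set Ee : ℝ → ℂ := fun t => (inner ℂ (G t) ((H₀ + (t : ℂ) • V) (G t)) : ℂ) with hEdef
  -- self-adjointness of H t
  have hHsa : ∀ t : ℝ, ∀ x y : E,
      (inner ℂ ((H₀ + (t : ℂ) • V) x) y : ℂ) = inner ℂ x ((H₀ + (t : ℂ) • V) y) := by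
    intro t x y
    have hsc : IsSelfAdjoint ((t : ℂ)) := Complex.conj_ofReal t
    exact (hH₀.add (hsc.smul hV)).isSymmetric x y
  have hSsa : ∀ x y : E, (inner ℂ (S x) y : ℂ) = inner ℂ x (S y) := fun x y => hS.isSymmetric x y
  have hGG : ∀ t : ℝ, (inner ℂ (G t) (G t) : ℂ) = 1 := by
    intro t
    rw [inner_self_eq_norm_sq_to_K, hnorm t]
    norm_num
  -- injectivity of H - E on the orthogonal complement
  have hinj : ∀ t : ℝ, ∀ w : E, (inner ℂ (G t) w : ℂ) = 0 →
      (H₀ + (t : ℂ) • V) w - (inner ℂ (G t) ((H₀ + (t : ℂ) • V) (G t)) : ℂ) • w = 0 →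
      w = 0 := by
    intro t w hw h0
    have h := hgap t w hw
    rw [h0] at h
    simp only [inner_zero_right, Complex.zero_re] at h
    have h2 : ‖w‖ ^ 2 ≤ 0 := by
      by_contra hc
      push_neg at hc
      nlinarith [mul_pos hΔ hc]
    have h3 : ‖w‖ ^ 2 = 0 := le_antisymm h2 (sq_nonneg _)
    have : ‖w‖ = 0 := by
      have := pow_eq_zero_iff (n := 2) (by norm_num) |>.mp h3
      exact this
    exact norm_eq_zero.mp this
  -- invariance of the orthogonal complement
  have hinv : ∀ t : ℝ, ∀ w : E, (inner ℂ (G t) w : ℂ) = 0 →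
      (inner ℂ (G t) ((H₀ + (t : ℂ) • V) w
        - (inner ℂ (G t) ((H₀ + (t : ℂ) • V) (G t)) : ℂ) • w) : ℂ) = 0 := by
    intro t w hw
    rw [inner_sub_right, inner_smul_right, hw, mul_zero, sub_zero,
      ← hHsa t (G t) w, heig t, inner_smul_left, hw, mul_zero]
  constructor
  · -- existence and uniqueness of solutions in the orthogonal complement
    intro lam v hv
    have hmem : ∀ w : E, w ∈ (ℂ ∙ G lam)ᗮ ↔ (inner ℂ (G lam) w : ℂ) = 0 := fun w =>
      Submodule.mem_orthogonal_singleton_iff_inner_right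
    set K := (ℂ ∙ G lam)ᗮ
    let T : K →ₗ[ℂ] K :=
      { toFun := fun w => ⟨(H₀ + (lam : ℂ) • V) (w : E)
            - (inner ℂ (G lam) ((H₀ + (lam : ℂ) • V) (G lam)) : ℂ) • (w : E),
          (hmem _).mpr (hinv lam w ((hmem _).mp w.2))⟩
        map_add' := by
          intro x y
          apply Subtype.ext
          simp [smul_add]
          abel
        map_smul' := by
          intro c x
          apply Subtype.ext
          simp [smul_sub, smul_smul, mul_comm] }
    have hTinj : Function.Injective T := by
      rw [← LinearMap.ker_eq_bot, LinearMap.ker_eq_bot']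
      intro w hw
      have : (w : E) = 0 := hinj lam w ((hmem _).mp w.2) (congrArg Subtype.val hw)
      exact Subtype.ext this
    obtain ⟨u, hu⟩ := (LinearMap.injective_iff_surjective.mp hTinj) ⟨v, hv⟩
    have hueq : (H₀ + (lam : ℂ) • V) (u : E)
        - (inner ℂ (G lam) ((H₀ + (lam : ℂ) • V) (G lam)) : ℂ) • (u : E) = v :=
      congrArg Subtype.val hu
    refine ⟨u, ⟨u.2, hueq⟩, ?_⟩
    rintro y ⟨hy, hyeq⟩
    have h0 : (H₀ + (lam : ℂ) • V) (y - u)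
        - (inner ℂ (G lam) ((H₀ + (lam : ℂ) • V) (G lam)) : ℂ) • (y - (u : E)) = 0 := by
      simp only [map_sub, smul_sub]
      rw [show (H₀ + (lam : ℂ) • V) y - (H₀ + (lam : ℂ) • V) (u : E)
          - ((inner ℂ (G lam) ((H₀ + (lam : ℂ) • V) (G lam)) : ℂ) • y
            - (inner ℂ (G lam) ((H₀ + (lam : ℂ) • V) (G lam)) : ℂ) • (u : E))
          = ((H₀ + (lam : ℂ) • V) y
              - (inner ℂ (G lam) ((H₀ + (lam : ℂ) • V) (G lam)) : ℂ) • y)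
            - ((H₀ + (lam : ℂ) • V) (u : E)
              - (inner ℂ (G lam) ((H₀ + (lam : ℂ) • V) (G lam)) : ℂ) • (u : E)) by abel,
        hyeq, hueq, sub_self]
    have hy0 : (inner ℂ (G lam) (y - (u : E)) : ℂ) = 0 := by
      rw [inner_sub_right, (hmem _).mp hy, (hmem _).mp u.2, sub_zero]
    have := hinj lam _ hy0 h0
    have : y = (u : E) := by rwa [sub_eq_zero] at this
    exact this
  · -- the derivative formula
    intro u hu hueq lam
    have hmem : ∀ w : E, w ∈ (ℂ ∙ G lam)ᗮ ↔ (inner ℂ (G lam) w : ℂ) = 0 := fun w =>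
      Submodule.mem_orthogonal_singleton_iff_inner_right
    -- derivative of t ↦ H t (G t)
    have h1 : HasDerivAt (fun t => H₀ (G t)) (H₀ (G' lam)) lam := by
      exact ((H₀.restrictScalars ℝ).hasFDerivAt (x := G lam)).comp_hasDerivAt lam (hG lam)
    have h2 : HasDerivAt (fun t => V (G t)) (V (G' lam)) lam := by
      exact ((V.restrictScalars ℝ).hasFDerivAt (x := G lam)).comp_hasDerivAt lam (hG lam)
    have hofReal : HasDerivAt (fun t : ℝ => (t : ℂ)) 1 lam := by
      have := Complex.ofRealCLM.hasDerivAt (x := lam)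
      simp only [Complex.ofRealCLM_apply, Complex.ofReal_one] at this
      exact this
    have h3 : HasDerivAt (fun t : ℝ => (t : ℂ) • V (G t))
        ((lam : ℂ) • V (G' lam) + V (G lam)) lam := by
      have := hofReal.smul h2
      simp only [one_smul] at this
      exact this
    set D : E := H₀ (G' lam) + ((lam : ℂ) • V (G' lam) + V (G lam)) with hDdef
    have hH : HasDerivAt (fun t : ℝ => (H₀ + (t : ℂ) • V) (G t)) D lam := by
      exact h1.add h3
    -- derivative of E
    have hE : HasDerivAt (fun t : ℝ => (inner ℂ (G t) ((H₀ + (t : ℂ) • V) (G t)) : ℂ))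
        ((inner ℂ (G lam) D : ℂ) + (inner ℂ (G' lam) ((H₀ + (lam : ℂ) • V) (G lam)) : ℂ)) lam :=
      (hG lam).inner ℂ hH
    -- derivative of the right-hand side of the eigenvalue equation
    have hRHS : HasDerivAt
        (fun t : ℝ => (inner ℂ (G t) ((H₀ + (t : ℂ) • V) (G t)) : ℂ) • G t)
        ((inner ℂ (G lam) ((H₀ + (lam : ℂ) • V) (G lam)) : ℂ) • G' lam
          + ((inner ℂ (G lam) D : ℂ)
            + (inner ℂ (G' lam) ((H₀ + (lam : ℂ) • V) (G lam)) : ℂ)) • G lam) lam :=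
      hE.smul (hG lam)
    have hfun : (fun t : ℝ => (H₀ + (t : ℂ) • V) (G t))
        = fun t : ℝ => (inner ℂ (G t) ((H₀ + (t : ℂ) • V) (G t)) : ℂ) • G t := funext heig
    have key : D = (inner ℂ (G lam) ((H₀ + (lam : ℂ) • V) (G lam)) : ℂ) • G' lam
        + ((inner ℂ (G lam) D : ℂ)
          + (inner ℂ (G' lam) ((H₀ + (lam : ℂ) • V) (G lam)) : ℂ)) • G lam := by
      apply HasDerivAt.unique (hfun ▸ hH) hRHS
    -- ⟪G', H G⟫ = 0
    have hz1 : (inner ℂ (G' lam) ((H₀ + (lam : ℂ) • V) (G lam)) : ℂ) = 0 := by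
      have h0 : (inner ℂ (G' lam) (G lam) : ℂ) = 0 := by
        rw [← inner_conj_symm, hgauge lam, map_zero]
      rw [heig lam, inner_smul_right, h0, mul_zero]
    -- D = H G' + V G
    have hD2 : D = (H₀ + (lam : ℂ) • V) (G' lam) + V (G lam) := by
      simp only [hDdef, ContinuousLinearMap.add_apply, ContinuousLinearMap.smul_apply]
      abel
    -- ⟪G, D⟫ = ⟪G, V G⟫
    have hGD : (inner ℂ (G lam) D : ℂ) = inner ℂ (G lam) (V (G lam)) := by
      rw [hD2, inner_add_right, ← hHsa lam (G lam) (G' lam), heig lam, inner_smul_left,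
        hgauge lam, mul_zero, zero_add]
    -- conclude (H - E) G' = -(V G - ⟪G, V G⟫ G)
    have key2 : (H₀ + (lam : ℂ) • V) (G' lam)
        - (inner ℂ (G lam) ((H₀ + (lam : ℂ) • V) (G lam)) : ℂ) • G' lam
        = -(V (G lam) - (inner ℂ (G lam) (V (G lam)) : ℂ) • G lam) := by
      have := key
      rw [hz1, add_zero, hGD, hD2] at this
      -- this : H G' + V G = E • G' + ⟪G,VG⟫ • G
      rw [sub_eq_iff_eq_add]
      rw [neg_sub]
      linear_combination (norm := module) this
    -- (H - E)(G' + u) = 0 hence G' = -u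
    have hsum0 : (H₀ + (lam : ℂ) • V) (G' lam + u lam)
        - (inner ℂ (G lam) ((H₀ + (lam : ℂ) • V) (G lam)) : ℂ) • (G' lam + u lam) = 0 := by
      rw [map_add, smul_add]
      have h4 := hueq lam
      rw [show (H₀ + (lam : ℂ) • V) (G' lam) + (H₀ + (lam : ℂ) • V) (u lam)
          - ((inner ℂ (G lam) ((H₀ + (lam : ℂ) • V) (G lam)) : ℂ) • G' lam
            + (inner ℂ (G lam) ((H₀ + (lam : ℂ) • V) (G lam)) : ℂ) • u lam)
          = ((H₀ + (lam : ℂ) • V) (G' lam)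
              - (inner ℂ (G lam) ((H₀ + (lam : ℂ) • V) (G lam)) : ℂ) • G' lam)
            + ((H₀ + (lam : ℂ) • V) (u lam)
              - (inner ℂ (G lam) ((H₀ + (lam : ℂ) • V) (G lam)) : ℂ) • u lam) by abel,
        key2, h4, neg_add_cancel]
    have hGu : G' lam = -(u lam) := by
      have hperp : (inner ℂ (G lam) (G' lam + u lam) : ℂ) = 0 := by
        rw [inner_add_right, hgauge lam, (hmem _).mp (hu lam), add_zero]
      have := hinj lam _ hperp hsum0
      rw [add_eq_zero_iff_eq_neg] at this
      exact this
    -- final derivative computation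
    have hSG : HasDerivAt (fun t => S (G t)) (S (G' lam)) lam := by
      exact ((S.restrictScalars ℝ).hasFDerivAt (x := G lam)).comp_hasDerivAt lam (hG lam)
    have hf : HasDerivAt (fun t : ℝ => (inner ℂ (G t) (S (G t)) : ℂ))
        ((inner ℂ (G lam) (S (G' lam)) : ℂ) + (inner ℂ (G' lam) (S (G lam)) : ℂ)) lam :=
      (hG lam).inner ℂ hSG
    convert hf using 1
    rw [hGu]
    rw [map_neg, inner_neg_right, inner_neg_left]
    have h5 : (inner ℂ (u lam) (S (G lam)) : ℂ)
        = conj (inner ℂ (G lam) (S (u lam)) : ℂ) := by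
      rw [← hSsa (u lam) (G lam), inner_conj_symm]
    rw [h5]
    rw [show -(inner ℂ (G lam) (S (u lam)) : ℂ) + -conj (inner ℂ (G lam) (S (u lam)) : ℂ)
        = -((inner ℂ (G lam) (S (u lam)) : ℂ) + conj (inner ℂ (G lam) (S (u lam)) : ℂ)) by ring,
      Complex.add_conj]
    push_cast
    ring
end

section
/- The conformal map f sends the unit disk into the open horizontal strip of half-width v. With Δ > 0, v > 0, T := tanh(Δ·π/(2v)), w(z) := 2z/(1+z²) and f(z) := (v/π)·Log((1 + T·w(z))/(1 − T·w(z))) for |z| < 1: for every z ∈ ℂ with |z| < 1 one has |Im f(z)| < v. -/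
/-- Auxiliary: a real number `u` with `u² > 1` cannot equal `2z/(1+z²)`-scaled
relation `u(1+z²) = 2z` for `|z| < 1`. -/
lemma aux_no_real_sol (u : ℝ) (hu : 1 < u ^ 2) (z : ℂ)
    (hz : z.re ^ 2 + z.im ^ 2 < 1) (h : (u : ℂ) * (1 + z ^ 2) = 2 * z) : False := by
  set x := z.re with hx
  set y := z.im with hy
  have h1 : u * (1 + (x ^ 2 - y ^ 2)) = 2 * x := by
    have := congrArg Complex.re h
    simpa [Complex.add_re, Complex.mul_re, Complex.mul_im, pow_two, ← hx, ← hy] using this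
  have h2 : u * (x * y + y * x) = 2 * y := by
    have := congrArg Complex.im h
    simpa [Complex.add_im, Complex.mul_re, Complex.mul_im, pow_two, ← hx, ← hy] using this
  have h2' : y * (u * x - 1) = 0 := by nlinarith [h2]
  rcases mul_eq_zero.1 h2' with hy0 | hux
  · -- z is real: then |u| ≤ 1, contradiction
    rw [hy0] at h1
    have h1sq : (u * (1 + (x ^ 2 - 0 ^ 2))) ^ 2 = (2 * x) ^ 2 := by rw [h1]
    nlinarith [h1sq, sq_nonneg (x ^ 2 - 1),
      mul_pos (sub_pos.2 hu) (pow_pos (by positivity : (0:ℝ) < 1 + x ^ 2) 2)]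
  · -- u x = 1 forces |z| = 1
    have hux' : u * x = 1 := by linarith
    have hu0 : (0:ℝ) < u ^ 2 := lt_trans one_pos hu
    have hB : u ^ 2 * x ^ 2 = 1 := by
      have : (u * x) ^ 2 = 1 := by rw [hux']; norm_num
      nlinarith [this]
    have h4 : u * (u * (1 + (x ^ 2 - y ^ 2))) = u * (2 * x) := by rw [h1]
    have h3 : u ^ 2 * (x ^ 2 + y ^ 2) < u ^ 2 := by nlinarith
    nlinarith [h4, hux', hB, h3]

/-- The conformal map `f(z) = (v/π) Log((1 + T w(z))/(1 - T w(z)))`, with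
`T = tanh(Δπ/(2v))` and `w(z) = 2z/(1+z²)`, sends the open unit disk into the open
horizontal strip `|Im f| < v`. -/
theorem conformal_map_into_strip
    (Δ v : ℝ) (hΔ : 0 < Δ) (hv : 0 < v) (z : ℂ) (hz : ‖z‖ < 1) :
    |(((v / Real.pi : ℝ) : ℂ) *
      Complex.log
        ((1 + ((Real.tanh (Δ * Real.pi / (2 * v)) : ℝ) : ℂ) * (2 * z / (1 + z ^ 2))) /
         (1 - ((Real.tanh (Δ * Real.pi / (2 * v)) : ℝ) : ℂ) * (2 * z / (1 + z ^ 2))))).im|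
      < v := by
  have hπ : (0 : ℝ) < Real.pi := Real.pi_pos
  set T : ℝ := Real.tanh (Δ * Real.pi / (2 * v)) with hT
  have harg : 0 < Δ * Real.pi / (2 * v) := by positivity
  have hT0 : 0 < T := by
    rw [hT, Real.tanh_eq_sinh_div_cosh]
    exact div_pos (Real.sinh_pos_iff.2 harg) (Real.cosh_pos _)
  have hT1 : T < 1 := by
    rw [hT, Real.tanh_eq_sinh_div_cosh]
    rw [div_lt_one (Real.cosh_pos _)]
    nlinarith [Real.cosh_sub_sinh (Δ * Real.pi / (2 * v)),
      Real.exp_pos (-(Δ * Real.pi / (2 * v)))]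
  set u : ℂ := 2 * z / (1 + z ^ 2) with hu
  set ξ : ℂ := (1 + (T : ℂ) * u) / (1 - (T : ℂ) * u) with hξ
  -- the imaginary part of the logarithm is the argument
  have him : (((v / Real.pi : ℝ) : ℂ) * Complex.log ξ).im = (v / Real.pi) * ξ.arg := by
    simp [Complex.mul_im, Complex.log_im]
  rw [him, abs_mul, abs_of_pos (div_pos hv hπ)]
  -- suffices |arg ξ| < π
  have hargne : ξ.arg ≠ Real.pi := by
    intro hpi
    rw [Complex.arg_eq_pi_iff] at hpi
    obtain ⟨hre, him0⟩ := hpi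
    -- ξ is a negative real number
    have hz2 : z.re ^ 2 + z.im ^ 2 < 1 := by
      have := Complex.sq_norm z
      have h1 : ‖z‖ ^ 2 < 1 := by nlinarith [norm_nonneg z]
      rw [Complex.sq_norm, Complex.normSq_apply] at h1
      nlinarith
    have hden : (1 : ℂ) + z ^ 2 ≠ 0 := by
      intro h0
      have : z ^ 2 = -1 := by linear_combination h0
      have : (z.re) ^ 2 - (z.im) ^ 2 = -1 := by
        have := congrArg Complex.re this
        simpa [pow_two, Complex.mul_re] using this
      nlinarith [sq_nonneg z.re, sq_nonneg z.im]
    have hsne : (1 : ℂ) - (T : ℂ) * u ≠ 0 := by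
      intro h0
      rw [hξ, h0, div_zero] at hre
      simp at hre
    set x : ℝ := ξ.re with hxr
    have hξx : ξ = (x : ℂ) := Complex.ext rfl (by simp [him0])
    have hkey : (1 : ℂ) + (T : ℂ) * u = (x : ℂ) * (1 - (T : ℂ) * u) := by
      rw [← hξx, hξ]
      field_simp
    have hx1 : x + 1 ≠ 0 := by
      intro h0
      have hxe : x = -1 := by linarith
      rw [hxe] at hkey
      push_cast at hkey
      have : (2 : ℂ) = 0 := by ring_nf at hkey ⊢; linear_combination hkey
      norm_num at this
    -- s = T u is the real number c
    set c : ℝ := (x - 1) / (x + 1) with hc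
    have hs : (T : ℂ) * u = (c : ℂ) := by
      have hx1' : ((x : ℂ) + 1) ≠ 0 := by
        intro h0
        have : x + 1 = 0 := by exact_mod_cast congrArg Complex.re h0
        exact hx1 this
      rw [hc]
      push_cast
      rw [eq_div_iff hx1']
      linear_combination hkey
    have hc2 : 1 < c ^ 2 := by
      have hcx : c * (x + 1) = x - 1 := by
        rw [hc]; field_simp
      nlinarith [sq_nonneg (x + 1), mul_pos (mul_pos (neg_pos.2 hre) (by norm_num : (0:ℝ) < 4)) (sq_nonneg (x+1) |>.lt_of_ne' (by positivity))]
    -- so u = c/T is real with |u| > 1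
    have hur : 1 < (c / T) ^ 2 := by
      rw [div_pow]
      rw [lt_div_iff₀ (by positivity)]
      nlinarith
    have hueq : ((c / T : ℝ) : ℂ) * (1 + z ^ 2) = 2 * z := by
      have hTne : ((T : ℝ) : ℂ) ≠ 0 := by exact_mod_cast hT0.ne'
      push_cast
      rw [div_mul_eq_mul_div, div_eq_iff hTne]
      have : (c : ℂ) * (1 + z ^ 2) = (T : ℂ) * u * (1 + z ^ 2) := by rw [hs]
      rw [this, hu]
      field_simp
    exact aux_no_real_sol (c / T) hur z hz2 hueq
  have habs : |ξ.arg| < Real.pi :=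
    abs_lt.2 ⟨Complex.neg_pi_lt_arg ξ, lt_of_le_of_ne (Complex.arg_le_pi ξ) hargne⟩
  calc v / Real.pi * |ξ.arg| < v / Real.pi * Real.pi :=
        mul_lt_mul_of_pos_left habs (div_pos hv hπ)
    _ = v := by field_simp
end

section
/- Lower bound for the imaginary part of the complex inverse hyperbolic tangent in the upper half plane. For every w ∈ ℂ with Im w > 0, Im( (1/2)·Log((1 + w)/(1 − w)) ) ≥ arctan(Im w), where Log is the principal branch of the complex logarithm. (Note that Im w > 0 guarantees w ≠ 1 and that (1+w)/(1−w) lies in the open upper half plane, so the principal logarithm is well defined and no branch-cut issue arises.) -/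
/-- Lower bound for the imaginary part of the complex `artanh` in the upper half plane:
for `Im w > 0`, `Im((1/2) Log((1+w)/(1-w))) ≥ arctan(Im w)`. -/
theorem im_artanh_ge_arctan_im (w : ℂ) (hw : 0 < w.im) :
    Real.arctan w.im ≤ ((1 / 2 : ℂ) * Complex.log ((1 + w) / (1 - w))).im := by
  set x := w.re with hx
  set y := w.im with hy
  set z : ℂ := (1 + w) / (1 - w) with hz
  have h1w : (1 - w) ≠ 0 := by
    intro h
    have : (1 - w).im = 0 := by rw [h]; simp
    simp only [Complex.sub_im, Complex.one_im] at this
    linarith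
  have hd : 0 < Complex.normSq (1 - w) := Complex.normSq_pos.2 h1w
  set d := Complex.normSq (1 - w) with hdd
  have hzre : z.re = (1 - (x ^ 2 + y ^ 2)) / d := by
    rw [hz, Complex.div_re]
    simp only [Complex.add_re, Complex.one_re, Complex.add_im, Complex.one_im,
      Complex.sub_re, Complex.sub_im, ← hx, ← hy, ← hdd]
    ring_nf
  have hzim : z.im = 2 * y / d := by
    rw [hz, Complex.div_im]
    simp only [Complex.add_re, Complex.one_re, Complex.add_im, Complex.one_im,
      Complex.sub_re, Complex.sub_im, ← hx, ← hy, ← hdd]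
    ring_nf
  have hzim_pos : 0 < z.im := by rw [hzim]; positivity
  have hz0 : z ≠ 0 := by
    intro h; rw [h] at hzim_pos; simp at hzim_pos
  set θ := Complex.arg z with hθ
  have hθ0 : 0 < θ := by
    rcases lt_or_eq_of_le (Complex.arg_nonneg_iff.2 hzim_pos.le) with h | h
    · exact h
    · exact absurd (Complex.arg_eq_zero_iff.1 h.symm).2 hzim_pos.ne'
  have hθπ : θ < Real.pi := Complex.arg_lt_pi_iff.2 (Or.inr hzim_pos.ne')
  have hgoal : ((1 / 2 : ℂ) * Complex.log z).im = θ / 2 := by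
    simp [Complex.mul_im, Complex.log_im, ← hθ]
    ring
  rw [hgoal]
  have hc : 0 < Real.cos (θ / 2) :=
    Real.cos_pos_of_mem_Ioo ⟨by linarith [Real.pi_pos], by linarith⟩
  have hA0 : 0 < ‖z‖ := norm_pos_iff.mpr hz0
  have hpos : 0 < ‖z‖ + z.re := by
    have h := abs_lt.1 ((Complex.abs_re_lt_norm).2 hzim_pos.ne')
    linarith [h.1]
  -- half-angle tangent formula
  have htan : Real.tan (θ / 2) = z.im / (‖z‖ + z.re) := by
    have hsin : Real.sin θ = 2 * Real.sin (θ / 2) * Real.cos (θ / 2) := by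
      have := Real.sin_two_mul (θ / 2)
      rw [show 2 * (θ / 2) = θ by ring] at this
      linarith
    have hcosθ : Real.cos θ = 2 * Real.cos (θ / 2) ^ 2 - 1 := by
      have := Real.cos_two_mul (θ / 2)
      rw [show 2 * (θ / 2) = θ by ring] at this
      linarith
    have h1 : Real.sin θ = z.im / ‖z‖ := Complex.sin_arg z
    have h2 : Real.cos θ = z.re / ‖z‖ := Complex.cos_arg hz0
    have e1 : z.im = ‖z‖ * (2 * Real.sin (θ / 2) * Real.cos (θ / 2)) := by
      rw [← hsin, h1]; field_simp
    have e2 : ‖z‖ + z.re = ‖z‖ * (2 * Real.cos (θ / 2) ^ 2) := by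
      have : z.re = ‖z‖ * Real.cos θ := by rw [h2]; field_simp
      rw [this, hcosθ]; ring
    rw [Real.tan_eq_sin_div_cos, e1, e2]
    field_simp
  -- the key inequality : y ≤ tan (θ/2)
  have hs : 0 ≤ x ^ 2 + y ^ 2 := by positivity
  have hA : ‖z‖ ≤ (1 + (x ^ 2 + y ^ 2)) / d := by
    rw [Complex.norm_def, ← Real.sqrt_sq (le_of_lt (by positivity :
      (0:ℝ) < (1 + (x ^ 2 + y ^ 2)) / d))]
    apply Real.sqrt_le_sqrt
    rw [Complex.normSq_apply, hzre, hzim, div_pow]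
    rw [div_mul_div_comm, div_mul_div_comm, ← add_div, ← sq d, ← pow_two, ← pow_two]
    apply div_le_div_of_nonneg_right ?_ (by positivity)
    nlinarith [sq_nonneg x, sq_nonneg y]
  have hkey : y ≤ Real.tan (θ / 2) := by
    rw [htan, le_div_iff₀ hpos]
    have : y * (‖z‖ + z.re) ≤ y * ((1 + (x ^ 2 + y ^ 2)) / d + (1 - (x ^ 2 + y ^ 2)) / d) := by
      apply mul_le_mul_of_nonneg_left _ hw.le
      rw [hzre]
      linarith
    calc y * (‖z‖ + z.re)
        ≤ y * ((1 + (x ^ 2 + y ^ 2)) / d + (1 - (x ^ 2 + y ^ 2)) / d) := this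
      _ = 2 * y / d := by ring
      _ = z.im := hzim.symm
  calc Real.arctan y ≤ Real.arctan (Real.tan (θ / 2)) :=
        Real.arctan_strictMono.monotone hkey
    _ = θ / 2 := Real.arctan_tan (by linarith [Real.pi_pos]) (by linarith)
end

section
/- Quantitative lower bound on Im f near the boundary of the disk. With Δ > 0, v > 0, T := tanh(Δ·π/(2v)), w(z) := 2z/(1+z²) and f(z) := (v/π)·Log((1 + T·w(z))/(1 − T·w(z))) for |z| < 1: there exists a constant c > 0 (depending only on Δ and v) such that for every ρ ∈ [0.9, 1) and every θ ∈ [0, π/2], Im f(ρ·e^{iθ}) ≥ c·(1 − ρ)·sin θ. -/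
set_option maxHeartbeats 1000000 in
/-- Quantitative lower bound on `Im f` near the boundary of the unit disk for the
conformal map `f(z) = (v/π) Log((1 + T w(z))/(1 - T w(z)))`, `T = tanh(Δπ/(2v))`,
`w(z) = 2z/(1+z²)`: there is `c > 0` (depending only on `Δ, v`) with
`Im f(ρ e^{iθ}) ≥ c (1-ρ) sin θ` for all `ρ ∈ [0.9, 1)` and `θ ∈ [0, π/2]`. -/
theorem im_conformal_map_lower_bound (Δ v : ℝ) (hΔ : 0 < Δ) (hv : 0 < v) :
    let f : ℂ → ℂ := fun w =>
      ((v / Real.pi : ℝ) : ℂ) *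
        Complex.log
          ((1 + ((Real.tanh (Δ * Real.pi / (2 * v)) : ℝ) : ℂ) * (2 * w / (1 + w ^ 2))) /
           (1 - ((Real.tanh (Δ * Real.pi / (2 * v)) : ℝ) : ℂ) * (2 * w / (1 + w ^ 2))))
    ∃ c : ℝ, 0 < c ∧ ∀ ρ : ℝ, 0.9 ≤ ρ → ρ < 1 → ∀ θ : ℝ, 0 ≤ θ → θ ≤ Real.pi / 2 →
      c * (1 - ρ) * Real.sin θ ≤ (f ((ρ : ℂ) * Complex.exp (θ * Complex.I))).im := by
  intro f
  have hπ : 0 < Real.pi := Real.pi_pos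
  set T := Real.tanh (Δ * Real.pi / (2 * v)) with hTdef
  have hT0 : 0 < T := by
    rw [hTdef, Real.tanh_eq_sinh_div_cosh]
    have h1 : 0 < Δ * Real.pi / (2 * v) := by positivity
    have h2 := Real.sinh_pos_iff.2 h1
    have h3 := Real.cosh_pos (Δ * Real.pi / (2 * v))
    positivity
  have hT1 : T < 1 := by
    rw [hTdef, Real.tanh_eq_sinh_div_cosh, div_lt_one (Real.cosh_pos _)]
    exact Real.sinh_lt_cosh _
  refine ⟨v / Real.pi * (9 / 40 * T), by positivity, ?_⟩
  intro ρ hρ9 hρ1 θ hθ0 hθπ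
  have hρ0 : (0:ℝ) < ρ := lt_of_lt_of_le (by norm_num) hρ9
  set z : ℂ := (ρ : ℂ) * Complex.exp ((θ:ℂ) * Complex.I) with hzdef
  have hzre : z.re = ρ * Real.cos θ := by
    simp [hzdef, Complex.mul_re, Complex.exp_ofReal_mul_I_re, Complex.exp_ofReal_mul_I_im]
  have hzim : z.im = ρ * Real.sin θ := by
    simp [hzdef, Complex.mul_im, Complex.exp_ofReal_mul_I_re, Complex.exp_ofReal_mul_I_im]
  have habs : ‖z‖ = ρ := by
    rw [hzdef, norm_mul, Complex.norm_exp_ofReal_mul_I, Complex.norm_real, Real.norm_eq_abs,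
      abs_of_pos hρ0, mul_one]
  have hD : (1 : ℂ) + z ^ 2 ≠ 0 := by
    intro h
    have hzz : z ^ 2 = -1 := by linear_combination h
    have h2 : ‖z ^ 2‖ = ρ ^ 2 := by rw [norm_pow, habs]
    rw [hzz] at h2
    simp at h2
    nlinarith
  set s := Real.sin θ with hsdef
  set co := Real.cos θ with hcodef
  have hsc : s ^ 2 + co ^ 2 = 1 := Real.sin_sq_add_cos_sq θ
  have hs0 : 0 ≤ s := Real.sin_nonneg_of_nonneg_of_le_pi hθ0 (by linarith)
  set u : ℂ := ((T:ℝ) : ℂ) * (2 * z / (1 + z ^ 2)) with hudef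
  set P : ℂ := 1 + z ^ 2 + 2 * ((T:ℝ):ℂ) * z with hPdef
  set Q : ℂ := 1 + z ^ 2 - 2 * ((T:ℝ):ℂ) * z with hQdef
  have hnum : P.im * Q.re - P.re * Q.im = 4 * T * ρ * (1 - ρ ^ 2) * s := by
    simp only [hPdef, hQdef, pow_two, Complex.add_re, Complex.add_im, Complex.sub_re,
      Complex.sub_im, Complex.mul_re, Complex.mul_im, Complex.one_re, Complex.one_im,
      Complex.ofReal_re, Complex.ofReal_im, Complex.re_ofNat, Complex.im_ofNat,
      hzre, hzim]
    linear_combination (-4*T*ρ^3*s) * hsc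
  have habs1z : ‖(1 + z ^ 2)‖ ≤ 1 + ρ ^ 2 := by
    calc ‖(1 + z ^ 2)‖ ≤ ‖1‖ + ‖(z ^ 2)‖ :=
          norm_add_le _ _
      _ = 1 + ρ ^ 2 := by rw [norm_pow, habs, norm_one]
  have habsTz : ‖(2 * ((T:ℝ):ℂ) * z)‖ = 2 * T * ρ := by
    rw [norm_mul, norm_mul, habs, Complex.norm_real, Real.norm_eq_abs, abs_of_pos hT0, Complex.norm_two]
  have habsP : ‖P‖ ≤ 4 := by
    calc ‖P‖ ≤ ‖(1 + z ^ 2)‖ + ‖(2 * ((T:ℝ):ℂ) * z)‖ :=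
          norm_add_le _ _
      _ ≤ (1 + ρ ^ 2) + 2 * T * ρ := by rw [habsTz]; linarith
      _ ≤ 4 := by nlinarith
  have habsQ : ‖Q‖ ≤ 4 := by
    have hq : Q = 1 + z ^ 2 + -(2 * ((T:ℝ):ℂ) * z) := by rw [hQdef]; ring
    rw [hq]
    calc ‖(1 + z ^ 2 + -(2 * ((T:ℝ):ℂ) * z))‖
        ≤ ‖(1 + z ^ 2)‖ + ‖(-(2 * ((T:ℝ):ℂ) * z))‖ :=
          norm_add_le _ _
      _ ≤ (1 + ρ ^ 2) + 2 * T * ρ := by rw [norm_neg, habsTz]; linarith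
      _ ≤ 4 := by nlinarith
  have hIm : (f z).im = v / Real.pi * ((1 + u) / (1 - u)).arg := by
    simp only [f, hudef, Complex.mul_im, Complex.ofReal_re, Complex.ofReal_im,
      Complex.log_im]
    ring
  have h1u : (1 : ℂ) - u = Q / (1 + z ^ 2) := by
    rw [hudef, hQdef]; field_simp
  have h1u' : (1 : ℂ) + u = P / (1 + z ^ 2) := by
    rw [hudef, hPdef]; field_simp
  rcases eq_or_lt_of_le hs0 with hs | hs
  · -- sin θ = 0 : right side is 0, need nonnegativity of the imaginary part
    rw [hIm, ← hs, mul_zero]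
    have harg : 0 ≤ ((1 + u) / (1 - u)).arg := by
      rw [Complex.arg_nonneg_iff]
      by_cases hQ0 : Q = 0
      · have h0 : (1:ℂ) - u = 0 := by rw [h1u, hQ0, zero_div]
        rw [h0, div_zero]
        simp
      · have hζ : (1 + u) / (1 - u) = P / Q := by
          rw [h1u, h1u', div_div_div_cancel_right₀]
          exact hD
        rw [hζ, Complex.div_im]
        have hnum' : P.im * Q.re - P.re * Q.im = 0 := by rw [hnum, ← hs]; ring
        have heq : P.im * Q.re / Complex.normSq Q - P.re * Q.im / Complex.normSq Q
            = (P.im * Q.re - P.re * Q.im) / Complex.normSq Q := by ring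
        rw [heq, hnum', zero_div]
    exact mul_nonneg (by positivity) harg
  · -- sin θ > 0
    have hK : 0 < 4 * T * ρ * (1 - ρ ^ 2) * s := by
      have h1ρ2 : (0:ℝ) < 1 - ρ ^ 2 := by nlinarith
      positivity
    have hQ0 : Q ≠ 0 := by
      intro h
      rw [h, Complex.zero_re, Complex.zero_im] at hnum
      simp only [mul_zero, sub_zero] at hnum
      linarith
    have hP0 : P ≠ 0 := by
      intro h
      rw [h, Complex.zero_re, Complex.zero_im] at hnum
      simp only [zero_mul, zero_sub, neg_eq_iff_eq_neg] at hnum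
      nlinarith [hnum]
    have hζ : (1 + u) / (1 - u) = P / Q := by
      rw [h1u, h1u', div_div_div_cancel_right₀]
      exact hD
    have hPpos := norm_pos_iff.mpr hP0
    have hQpos := norm_pos_iff.mpr hQ0
    have habsPQ : 0 < ‖P‖ * ‖Q‖ := mul_pos hPpos hQpos
    have him : ((P / Q).im) = (4 * T * ρ * (1 - ρ ^ 2) * s) / Complex.normSq Q := by
      rw [Complex.div_im, ← hnum]; ring
    have habsdiv : ‖(P / Q)‖ = ‖P‖ / ‖Q‖ := norm_div _ _
    have hsinval : Real.sin ((P / Q).arg)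
        = (4 * T * ρ * (1 - ρ ^ 2) * s) / (‖P‖ * ‖Q‖) := by
      rw [Complex.sin_arg, him, habsdiv, Complex.normSq_eq_norm_sq]
      field_simp
    have hargnn : 0 ≤ ((P / Q).arg) := by
      rw [Complex.arg_nonneg_iff, him]
      have := Complex.normSq_pos.2 hQ0
      positivity
    have hsinle : Real.sin ((P / Q).arg) ≤ (P / Q).arg := Real.sin_le hargnn
    have h16 : ‖P‖ * ‖Q‖ ≤ 16 := by nlinarith
    have hcoef : (0:ℝ) ≤ 9 / 40 * T * (1 - ρ) * s := by
      have h1ρ : (0:ℝ) ≤ 1 - ρ := by linarith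
      positivity
    have hlow : 9 / 40 * T * (1 - ρ) * s
        ≤ (4 * T * ρ * (1 - ρ ^ 2) * s) / (‖P‖ * ‖Q‖) := by
      rw [le_div_iff₀ habsPQ]
      have step1 : 9 / 40 * T * (1 - ρ) * s * (‖P‖ * ‖Q‖)
          ≤ 9 / 40 * T * (1 - ρ) * s * 16 := mul_le_mul_of_nonneg_left h16 hcoef
      have hprod : (0:ℝ) ≤ (T * s * (1 - ρ)) * (4 * ρ + 4 * ρ ^ 2 - 3.6) := by
        apply mul_nonneg
        · have h1ρ : (0:ℝ) ≤ 1 - ρ := by linarith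
          positivity
        · nlinarith
      nlinarith [step1, hprod]
    have hchain : 9 / 40 * T * (1 - ρ) * s ≤ ((1 + u) / (1 - u)).arg := by
      rw [hζ]
      calc 9 / 40 * T * (1 - ρ) * s
          ≤ (4 * T * ρ * (1 - ρ ^ 2) * s) / (‖P‖ * ‖Q‖) := hlow
        _ = Real.sin ((P / Q).arg) := hsinval.symm
        _ ≤ (P / Q).arg := hsinle
    rw [hIm]
    have hvπ : (0:ℝ) ≤ v / Real.pi := by positivity
    calc v / Real.pi * (9 / 40 * T) * (1 - ρ) * s
        = v / Real.pi * (9 / 40 * T * (1 - ρ) * s) := by ring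
      _ ≤ v / Real.pi * ((1 + u) / (1 - u)).arg :=
          mul_le_mul_of_nonneg_left hchain hvπ
end

section
/- Radial derivative of the angular integral of Im f. With Δ > 0, v > 0, T := tanh(Δ·π/(2v)), w(z) := 2z/(1+z²) and f(z) := (v/π)·Log((1 + T·w(z))/(1 − T·w(z))) for |z| < 1: for every ρ ∈ (0, 1), the function ρ ↦ ∫₀^{π/2} Im f(ρ·e^{iθ}) dθ is differentiable at ρ with derivative equal to Re(f(ρ))/ρ. (Here f(ρ) is real and f(i·ρ) is purely imaginary, reflecting that f is an odd analytic function with real Taylor coefficients.) -/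
open Complex Metric

private lemma auxA (z : ℂ) (hz : ‖z‖ < 1) : 1 + z^2 ≠ 0 := by
  intro h
  have h2 : z^2 = -1 := by linear_combination h
  have : ‖z‖^2 = 1 := by
    have := congrArg norm h2
    simpa [norm_pow] using this
  nlinarith [norm_nonneg z]

private lemma auxnorm (z : ℂ) (hz : ‖z‖ < 1) : z.re^2 + z.im^2 < 1 := by
  have : ‖z‖ < 1 := by simpa using hz
  have h2 := Complex.sq_norm z
  rw [Complex.normSq_apply] at h2
  nlinarith [norm_nonneg z]

private lemma auxB (T : ℝ) (hT0 : 0 < T) (hT1 : T < 1) (z : ℂ) (hz : ‖z‖ < 1) :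
    1 - 2*(T:ℂ)*z + z^2 ≠ 0 := by
  intro h
  have hre : 1 - 2*T*z.re + (z.re^2 - z.im^2) = 0 := by
    have := congrArg Complex.re h
    simpa [Complex.add_re, Complex.sub_re, Complex.mul_re, pow_two] using this
  have him0 := congrArg Complex.im h
  simp [Complex.add_im, Complex.sub_im, Complex.mul_im, pow_two] at him0
  have him : z.im * (z.re - T) = 0 := by linear_combination him0/2
  have hn := auxnorm z hz
  rcases mul_eq_zero.1 him with h1 | h2
  · rw [h1] at hre hn; nlinarith [sq_nonneg (z.re - T)]
  · have h2' : z.re = T := by linarith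
    rw [h2'] at hre hn; nlinarith

private lemma auxB' (T : ℝ) (hT0 : 0 < T) (hT1 : T < 1) (z : ℂ) (hz : ‖z‖ < 1) :
    1 - (T:ℂ) * (2*z/(1+z^2)) ≠ 0 := by
  have h1 := auxA z hz
  have h2 := auxB T hT0 hT1 z hz
  intro h
  apply h2
  have : (1 - (T:ℂ) * (2*z/(1+z^2))) * (1+z^2) = 1 - 2*T*z + z^2 := by
    field_simp; ring
  rw [h, zero_mul] at this
  exact this.symm

private lemma auxquot (T : ℝ) (hT0 : 0 < T) (hT1 : T < 1) (z : ℂ) (hz : ‖z‖ < 1) :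
    (1 + (T:ℂ) * (2*z/(1+z^2))) / (1 - (T:ℂ) * (2*z/(1+z^2)))
      = (1 + 2*(T:ℂ)*z + z^2) / (1 - 2*(T:ℂ)*z + z^2) := by
  have h1 := auxA z hz
  have h2 := auxB T hT0 hT1 z hz
  have h3 := auxB' T hT0 hT1 z hz
  rw [div_eq_div_iff h3 h2]
  field_simp
  ring

private lemma auxslit (T : ℝ) (hT0 : 0 < T) (hT1 : T < 1) (z : ℂ) (hz : ‖z‖ < 1) :
    (1 + (T:ℂ) * (2*z/(1+z^2))) / (1 - (T:ℂ) * (2*z/(1+z^2))) ∈ Complex.slitPlane := by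
  rw [auxquot T hT0 hT1 z hz, Complex.mem_slitPlane_iff]
  have h2 := auxB T hT0 hT1 z hz
  have hn := auxnorm z hz
  have hns : 0 < Complex.normSq (1 - 2*(T:ℂ)*z + z^2) := by
    simpa [Complex.normSq_pos] using h2
  set x := z.re with hx
  set y := z.im with hy
  have hDre : (1 - 2*(T:ℂ)*z + z^2).re = 1 - 2*T*x + (x^2 - y^2) := by
    simp [Complex.add_re, Complex.sub_re, Complex.mul_re, pow_two, hx, hy]
  have hDim : (1 - 2*(T:ℂ)*z + z^2).im = -(2*T*y) + (x*y + y*x) := by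
    simp [Complex.add_im, Complex.sub_im, Complex.mul_im, pow_two, hx, hy]
  have hNre : (1 + 2*(T:ℂ)*z + z^2).re = 1 + 2*T*x + (x^2 - y^2) := by
    simp [Complex.add_re, Complex.mul_re, pow_two, hx, hy]
  have hNim : (1 + 2*(T:ℂ)*z + z^2).im = 2*T*y + (x*y + y*x) := by
    simp [Complex.add_im, Complex.mul_im, pow_two, hx, hy]
  rcases eq_or_ne y 0 with h0 | h0
  · left
    rw [Complex.div_re, hDre, hDim, hNre, hNim, h0, ← add_div]
    apply div_pos _ hns
    rw [h0] at hn
    have hT2 : T^2 < 1 := by nlinarith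
    have h1x : (0:ℝ) < 1 - x^2 := by nlinarith
    nlinarith [mul_pos h1x h1x, mul_nonneg (sq_nonneg x) (le_of_lt (sub_pos.2 hT2))]
  · right
    rw [Complex.div_im, hDre, hDim, hNre, hNim, div_sub_div_same]
    apply div_ne_zero _ hns.ne'
    have hnn : 0 < 1 - x^2 - y^2 := by nlinarith
    intro hcon
    have heq : 4*T*y*(1 - x^2 - y^2) = 0 := by linear_combination hcon
    exact (mul_ne_zero (mul_ne_zero (by positivity) h0) hnn.ne') heq

private lemma auxDiffAt (c T : ℝ) (hT0 : 0 < T) (hT1 : T < 1) (z : ℂ) (hz : ‖z‖ < 1) :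
    DifferentiableAt ℂ (fun w => ((c:ℝ):ℂ) *
      Complex.log ((1 + (T:ℂ)*(2*w/(1+w^2)))/(1 - (T:ℂ)*(2*w/(1+w^2))))) z := by
  apply DifferentiableAt.const_mul
  have hw : DifferentiableAt ℂ (fun w : ℂ => (T:ℂ)*(2*w/(1+w^2))) z := by
    apply DifferentiableAt.const_mul
    exact DifferentiableAt.div (by fun_prop) (by fun_prop) (auxA z hz)
  have hq : DifferentiableAt ℂ
      (fun w => (1 + (T:ℂ)*(2*w/(1+w^2)))/(1 - (T:ℂ)*(2*w/(1+w^2)))) z := by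
    apply DifferentiableAt.div
    · exact (differentiableAt_const _).add hw
    · exact (differentiableAt_const _).sub hw
    · exact auxB' T hT0 hT1 z hz
  exact (Complex.differentiableAt_log (auxslit T hT0 hT1 z hz)).comp z hq

private lemma auxReZero (c T : ℝ) (hT0 : 0 < T) (hT1 : T < 1) (ρ : ℝ) (hρ0 : 0 < ρ) (hρ1 : ρ < 1) :
    (((c:ℝ):ℂ) * Complex.log ((1 + (T:ℂ)*(2*((ρ:ℂ)*I)/(1+((ρ:ℂ)*I)^2)))
      / (1 - (T:ℂ)*(2*((ρ:ℂ)*I)/(1+((ρ:ℂ)*I)^2))))).re = 0 := by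
  have hρne : (1:ℝ) - ρ^2 ≠ 0 := by nlinarith
  set u := (T:ℂ)*(2*((ρ:ℂ)*I)/(1+((ρ:ℂ)*I)^2)) with hudef
  have hu : u = ((2*T*ρ/(1-ρ^2):ℝ):ℂ) * I := by
    rw [hudef]
    have h1 : 1+((ρ:ℂ)*I)^2 = ((1-ρ^2:ℝ):ℂ) := by
      push_cast
      simp [mul_pow, Complex.I_sq]
      ring
    rw [h1]
    push_cast
    have : ((1:ℂ)-ρ^2) ≠ 0 := by
      simpa using Complex.ofReal_ne_zero.2 hρne
    field_simp
  have habs : ‖1+u‖ = ‖1-u‖ := by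
    rw [hu]
    generalize (2*T*ρ/(1-ρ^2) : ℝ) = t
    simp [Complex.norm_def, Complex.normSq_apply]
  have hne : (1:ℂ) - u ≠ 0 := by
    apply auxB' T hT0 hT1
    rw [norm_mul]
    simp [abs_of_pos hρ0, hρ1]
  have habsq : ‖(1+u)/(1-u)‖ = 1 := by
    rw [norm_div, habs, div_self]
    exact norm_ne_zero_iff.mpr hne
  rw [Complex.mul_re]
  simp [Complex.log_re, Complex.log_im, habsq, habs, hne]

/-- Radial derivative of the angular integral of `Im f` for the conformal map
`f(z) = (v/π) Log((1 + T w(z))/(1 - T w(z)))`, `T = tanh(Δπ/(2v))`, `w(z) = 2z/(1+z²)`: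
for `ρ ∈ (0,1)`, `d/dρ ∫₀^{π/2} Im f(ρ e^{iθ}) dθ = Re f(ρ) / ρ`. -/
theorem deriv_angular_integral_im_conformal_map
    (Δ v : ℝ) (hΔ : 0 < Δ) (hv : 0 < v) (ρ : ℝ) (hρ0 : 0 < ρ) (hρ1 : ρ < 1) :
    let f : ℂ → ℂ := fun w =>
      ((v / Real.pi : ℝ) : ℂ) *
        Complex.log
          ((1 + ((Real.tanh (Δ * Real.pi / (2 * v)) : ℝ) : ℂ) * (2 * w / (1 + w ^ 2))) /
           (1 - ((Real.tanh (Δ * Real.pi / (2 * v)) : ℝ) : ℂ) * (2 * w / (1 + w ^ 2))))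
    HasDerivAt
      (fun s : ℝ => ∫ θ in (0:ℝ)..(Real.pi / 2),
        (f ((s : ℂ) * Complex.exp (θ * Complex.I))).im)
      ((f (ρ : ℂ)).re / ρ) ρ := by
  intro f
  set c : ℝ := v / Real.pi with hcdef
  set T : ℝ := Real.tanh (Δ * Real.pi / (2 * v)) with hTdef
  have hT0 : 0 < T := by
    rw [hTdef, Real.tanh_eq_sinh_div_cosh]
    have : 0 < Δ * Real.pi / (2*v) := by positivity
    exact div_pos (by positivity) (Real.cosh_pos _)
  have hT1 : T < 1 := by
    rw [hTdef, Real.tanh_eq_sinh_div_cosh, div_lt_one (Real.cosh_pos _)]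
    exact Real.sinh_lt_cosh _
  have hfdiff : ∀ z : ℂ, ‖z‖ < 1 → DifferentiableAt ℂ f z :=
    fun z hz => auxDiffAt c T hT0 hT1 z hz
  have hfd : DifferentiableOn ℂ f (ball (0:ℂ) 1) := fun z hz =>
    (hfdiff z (by simpa using hz)).differentiableWithinAt
  have hAnal : AnalyticOnNhd ℂ f (ball (0:ℂ) 1) := hfd.analyticOnNhd isOpen_ball
  have hderivCont : ContinuousOn (deriv f) (ball (0:ℂ) 1) := hAnal.deriv.continuousOn
  set r : ℝ := (1+ρ)/2 with hrdef
  have hρr : ρ < r := by rw [hrdef]; linarith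
  have hr1 : r < 1 := by rw [hrdef]; linarith
  have hr0 : 0 < r := by rw [hrdef]; linarith
  obtain ⟨M, hM⟩ := (isCompact_closedBall (0:ℂ) r).exists_bound_of_continuousOn
    (hderivCont.mono (closedBall_subset_ball hr1))
  set ε : ℝ := min (r - ρ) ρ with hεdef
  have hε : 0 < ε := by
    rw [hεdef]; exact lt_min (by linarith) hρ0
  have hball : ∀ x : ℝ, x ∈ ball ρ ε → 0 < x ∧ x < r := by
    intro x hx
    rw [mem_ball, Real.dist_eq, abs_lt] at hx
    constructor
    · have := min_le_right (r - ρ) ρ; rw [← hεdef] at this; linarith [hx.1]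
    · have := min_le_left (r - ρ) ρ; rw [← hεdef] at this; linarith [hx.2]
  have hmem : ∀ x : ℝ, |x| ≤ r → ∀ θ : ℝ, (x:ℂ) * Complex.exp (θ * Complex.I) ∈ closedBall (0:ℂ) r := by
    intro x hx θ
    rw [mem_closedBall_zero_iff, norm_mul, Complex.norm_real, Real.norm_eq_abs,
      Complex.norm_exp_ofReal_mul_I, mul_one]
    exact hx
  have hmem1 : ∀ x : ℝ, |x| < 1 → ∀ θ : ℝ, ‖(x:ℂ) * Complex.exp (θ * Complex.I)‖ < 1 := by
    intro x hx θ
    rw [norm_mul, Complex.norm_real, Real.norm_eq_abs,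
      Complex.norm_exp_ofReal_mul_I, mul_one]
    exact hx
  have hcont : ∀ x : ℝ, |x| < 1 → Continuous fun θ : ℝ => (f ((x:ℂ) * Complex.exp (θ * Complex.I))).im := by
    intro x hx
    apply Complex.continuous_im.comp
    apply hfd.continuousOn.comp_continuous
    · fun_prop
    · intro θ
      rw [mem_ball_zero_iff]
      exact hmem1 x hx θ
  have hρlt1 : |ρ| < 1 := by rw [abs_of_pos hρ0]; exact hρ1
  have key := intervalIntegral.hasDerivAt_integral_of_dominated_loc_of_deriv_le
    (μ := MeasureTheory.volume) (a := 0) (b := Real.pi/2) (x₀ := ρ)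
    (F := fun (x : ℝ) (θ : ℝ) => (f ((x:ℂ) * Complex.exp (θ * Complex.I))).im)
    (F' := fun (x : ℝ) (θ : ℝ) => (deriv f ((x:ℂ) * Complex.exp (θ * Complex.I)) * Complex.exp ((θ:ℝ) * Complex.I)).im)
    (bound := fun _ => M) (ball_mem_nhds ρ hε)
    ?hmeas ?hint ?hmeas' ?hbound ?hboundint ?hdiff
  case hmeas =>
    filter_upwards [ball_mem_nhds ρ hε] with x hx
    have h1 := (hball x hx).1
    have h2 := (hball x hx).2
    exact ((hcont x (by rw [abs_of_pos h1]; linarith)).aestronglyMeasurable)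
  case hint =>
    exact (hcont ρ hρlt1).intervalIntegrable 0 (Real.pi/2)
  case hmeas' =>
    have : Continuous fun θ : ℝ => (deriv f ((ρ:ℂ) * Complex.exp (θ * Complex.I)) * Complex.exp ((θ:ℝ) * Complex.I)).im := by
      apply Complex.continuous_im.comp
      apply Continuous.mul
      · apply hderivCont.comp_continuous
        · fun_prop
        · intro θ
          rw [mem_ball_zero_iff]
          exact hmem1 ρ hρlt1 θ
      · fun_prop
    exact this.aestronglyMeasurable
  case hbound =>
    apply Filter.Eventually.of_forall
    intro θ _ x hx
    have h1 := (hball x hx).1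
    have h2 := (hball x hx).2
    have hmemx : (x:ℂ) * Complex.exp (θ * Complex.I) ∈ closedBall (0:ℂ) r :=
      hmem x (by rw [abs_of_pos h1]; linarith) θ
    calc ‖(deriv f ((x:ℂ) * Complex.exp (θ * Complex.I)) * Complex.exp ((θ:ℝ) * Complex.I)).im‖
        ≤ ‖deriv f ((x:ℂ) * Complex.exp (θ * Complex.I)) * Complex.exp ((θ:ℝ) * Complex.I)‖ := by
          rw [Real.norm_eq_abs]; exact Complex.abs_im_le_norm _
      _ = ‖deriv f ((x:ℂ) * Complex.exp (θ * Complex.I))‖ := by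
          rw [norm_mul, Complex.norm_exp_ofReal_mul_I, mul_one]
      _ ≤ M := by
          have := hM _ hmemx
          exact this
  case hboundint =>
    exact intervalIntegrable_const
  case hdiff =>
    apply Filter.Eventually.of_forall
    intro θ _ x hx
    have h1 := (hball x hx).1
    have h2 := (hball x hx).2
    have hz : ‖(x:ℂ) * Complex.exp (θ * Complex.I)‖ < 1 :=
      hmem1 x (by rw [abs_of_pos h1]; linarith) θ
    have hd1 : HasDerivAt (fun s : ℝ => (s:ℂ) * Complex.exp (θ * Complex.I))
        (Complex.exp ((θ:ℝ) * Complex.I)) x := by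
      simpa using Complex.ofRealCLM.hasDerivAt.mul_const (Complex.exp ((θ:ℝ) * Complex.I))
    have hd2 := ((hfdiff _ hz).hasDerivAt).scomp x hd1
    have hd3 := Complex.imCLM.hasFDerivAt.comp_hasDerivAt x hd2
    simpa [Function.comp_def, smul_eq_mul, mul_comm] using hd3
  -- now rewrite the integral of F' ρ
  have hG : ∀ θ ∈ Set.uIcc (0:ℝ) (Real.pi/2),
      HasDerivAt (fun θ : ℝ => -(f ((ρ:ℂ) * Complex.exp (θ * Complex.I))).re / ρ)
        ((deriv f ((ρ:ℂ) * Complex.exp (θ * Complex.I)) * Complex.exp ((θ:ℝ) * Complex.I)).im) θ := by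
    intro θ _
    have hu : HasDerivAt (fun θ : ℝ => (θ:ℂ) * Complex.I) Complex.I θ := by
      simpa using Complex.ofRealCLM.hasDerivAt.mul_const Complex.I
    have hexp : HasDerivAt (fun θ : ℝ => Complex.exp ((θ:ℝ) * Complex.I))
        (Complex.I * Complex.exp ((θ:ℝ) * Complex.I)) θ := by
      simpa [smul_eq_mul, Function.comp_def] using (Complex.hasDerivAt_exp ((θ:ℂ) * Complex.I)).scomp θ hu
    have hc' : HasDerivAt (fun θ : ℝ => (ρ:ℂ) * Complex.exp ((θ:ℝ) * Complex.I))
        ((ρ:ℂ) * (Complex.I * Complex.exp ((θ:ℝ) * Complex.I))) θ := hexp.const_mul _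
    have hz : ‖(ρ:ℂ) * Complex.exp (θ * Complex.I)‖ < 1 := hmem1 ρ hρlt1 θ
    have hd2 := ((hfdiff _ hz).hasDerivAt).scomp θ hc'
    have hd3 := Complex.reCLM.hasFDerivAt.comp_hasDerivAt θ hd2
    have hd4 := (hd3.neg).div_const ρ
    have heq : -(Complex.reCLM (((ρ:ℂ) * (Complex.I * Complex.exp ((θ:ℝ) * Complex.I))) • deriv f ((ρ:ℂ) * Complex.exp ((θ:ℝ) * Complex.I)))) / ρ
        = (deriv f ((ρ:ℂ) * Complex.exp ((θ:ℝ) * Complex.I)) * Complex.exp ((θ:ℝ) * Complex.I)).im := by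
      simp only [Complex.reCLM_apply, smul_eq_mul]
      rw [div_eq_iff (ne_of_gt hρ0)]
      simp [Complex.mul_re, Complex.mul_im]
      ring
    rw [heq] at hd4
    exact hd4
  have hFTC := intervalIntegral.integral_eq_sub_of_hasDerivAt hG key.1
  have hI : Complex.exp ((Real.pi/2 : ℝ) * Complex.I) = Complex.I := by
    rw [Complex.exp_mul_I]
    simp [← Complex.ofReal_cos, ← Complex.ofReal_sin, Real.cos_pi_div_two, Real.sin_pi_div_two]
  have hre0 : (f ((ρ:ℂ) * Complex.I)).re = 0 := auxReZero c T hT0 hT1 ρ hρ0 hρ1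
  have hval : (∫ θ in (0:ℝ)..(Real.pi/2),
      (deriv f ((ρ:ℂ) * Complex.exp (θ * Complex.I)) * Complex.exp ((θ:ℝ) * Complex.I)).im)
      = (f (ρ:ℂ)).re / ρ := by
    rw [hFTC]
    rw [hI]
    simp only [Complex.ofReal_zero, zero_mul, Complex.exp_zero, mul_one]
    rw [hre0]
    ring
  have := key.2
  rwa [hval] at this
end
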